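/- arXiv:1504.06448 — 3 statements merged into one kernel-verified Lean document; each statement's English description precedes it below -/
import Mathlib

section
/- For every L > 0 and η ∈ ℝ, the limit as ρ → 0⁺ of (F_L(η,ρ)² − F_{L−1}(η,ρ)·F_{L+1}(η,ρ))/F_L(η,ρ)² exists and equals 1 − C_{L−1}(η)·C_{L+1}(η)/C_L(η)² = 1 − L(2L+1)√((L+1)² + η²)/((L+1)(2L+3)√(L² + η²)). (This shows the constant in the sharp Turán inequality is best possible.) -/
open Real

/-- Coefficients of the power series of the normalized regular Coulomb wave function. -/
noncomputable def coulombA (L η : ℝ) : ℕ → ℝ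
  | 0 => 1
  | 1 => η / (L + 1)
  | (n + 2) => (2 * η * coulombA L η (n + 1) - coulombA L η n) /
      (((n : ℝ) + 2) * (((n : ℝ) + 2) + 2 * L + 1))

/-- The normalized regular Coulomb wave function `𝓕_L(η,ρ) = ∑ a_{L,n} ρ^n`. -/
noncomputable def coulombF (L η ρ : ℝ) : ℝ := ∑' n : ℕ, coulombA L η n * ρ ^ n

/-- The normalizing constant `C_L(η)`. -/
noncomputable def coulombC (L η : ℝ) : ℝ :=
  2 ^ L * Real.exp (-(Real.pi * η / 2)) *
    ‖Complex.Gamma ((L : ℂ) + 1 + (η : ℂ) * Complex.I)‖ / Real.Gamma (2 * L + 2)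

/-- The regular Coulomb wave function `F_L(η,ρ) = C_L(η) ρ^{L+1} 𝓕_L(η,ρ)`. -/
noncomputable def coulombRegF (L η ρ : ℝ) : ℝ := coulombC L η * ρ ^ (L + 1) * coulombF L η ρ

/-- The set of (nonzero) zeros of the Coulomb wave function. -/
def coulombZ (L η : ℝ) : Set ℝ := {ρ₀ | ρ₀ ≠ 0 ∧ coulombF L η ρ₀ = 0}

/-- `0 < ρ < x_{L,η,1}`: `ρ` is positive and below the first positive zero. -/
def belowFirstZero (L η ρ : ℝ) : Prop :=
  0 < ρ ∧ ∀ t : ℝ, 0 < t → t ≤ ρ → coulombF L η t ≠ 0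

/-- The Coulomb zeta function `ζ_{s,η}(L)`. -/
noncomputable def coulombZeta (s : ℕ) (η L : ℝ) : ℝ :=
  ∑' ρ₀ : coulombZ L η, ((ρ₀ : ℝ) ^ s)⁻¹

lemma coulombA_le (L η : ℝ) (hL : -1 < L) (n : ℕ) :
    |coulombA L η n| ≤ (max (max 1 (2*|η|+1)) (|η|/(L+1))) ^ n := by
  set c := max (max 1 (2*|η|+1)) (|η|/(L+1)) with hc
  have hc1 : (1:ℝ) ≤ c := le_trans (le_max_left _ _) (le_max_left _ _)
  have hcη : 2*|η|+1 ≤ c := le_trans (le_max_right _ _) (le_max_left _ _)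
  induction n using Nat.twoStepInduction with
  | zero => simp [coulombA]
  | one =>
    have hL1 : (0:ℝ) < L + 1 := by linarith
    simp only [coulombA, pow_one]
    calc |η/(L+1)| = |η|/(L+1) := by rw [abs_div, abs_of_pos hL1]
      _ ≤ c := le_max_right _ _
  | more n ih1 ih2 =>
    have hd : (2:ℝ) ≤ ((n:ℝ) + 2) * (((n : ℝ) + 2) + 2 * L + 1) := by
      have hn : (0:ℝ) ≤ n := Nat.cast_nonneg n
      nlinarith
    have hd0 : (0:ℝ) < ((n:ℝ) + 2) * (((n : ℝ) + 2) + 2 * L + 1) := by linarith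
    show |(2 * η * coulombA L η (n + 1) - coulombA L η n) /
      (((n : ℝ) + 2) * (((n : ℝ) + 2) + 2 * L + 1))| ≤ c ^ (n+2)
    rw [abs_div, abs_of_pos hd0, div_le_iff₀ hd0]
    have h1 : |2 * η * coulombA L η (n + 1) - coulombA L η n| ≤
        2 * |η| * c ^ (n+1) + c ^ n := by
      calc |2 * η * coulombA L η (n + 1) - coulombA L η n|
          ≤ |2 * η * coulombA L η (n + 1)| + |coulombA L η n| := abs_sub _ _
        _ ≤ 2 * |η| * c ^ (n+1) + c ^ n := by
            rw [abs_mul, abs_mul, abs_two]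
            exact add_le_add (mul_le_mul_of_nonneg_left ih2 (by positivity)) ih1
    have hcp : (0:ℝ) < c := lt_of_lt_of_le one_pos hc1
    have hpow : c ^ n ≤ c ^ (n+1) := by
      apply pow_le_pow_right₀ hc1; omega
    calc |2 * η * coulombA L η (n + 1) - coulombA L η n|
        ≤ 2 * |η| * c ^ (n+1) + c ^ n := h1
      _ ≤ (2*|η|+1) * c ^ (n+1) := by nlinarith
      _ ≤ c * c ^ (n+1) := by gcongr
      _ = c ^ (n+2) := by ring
      _ ≤ c ^ (n+2) * (((n:ℝ) + 2) * (((n : ℝ) + 2) + 2 * L + 1)) := by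
          nlinarith [pow_pos hcp (n+2)]

lemma coulombF_tendsto_one (L η : ℝ) (hL : -1 < L) :
    Filter.Tendsto (coulombF L η) (nhds 0) (nhds 1) := by
  set c := max (max 1 (2*|η|+1)) (|η|/(L+1)) with hc
  have hc1 : (1:ℝ) ≤ c := le_trans (le_max_left _ _) (le_max_left _ _)
  have hcp : (0:ℝ) < c := lt_of_lt_of_le one_pos hc1
  set δ : ℝ := 1 / (2 * c) with hδ
  have hδp : 0 < δ := by positivity
  have hcont : ContinuousOn (fun x => ∑' n : ℕ, coulombA L η n * x ^ n)
      (Set.Icc (-δ) δ) := by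
    apply continuousOn_tsum (u := fun n => (1/2 : ℝ) ^ n)
    · intro i; exact (continuous_const.mul (continuous_pow i)).continuousOn
    · exact summable_geometric_of_lt_one (by norm_num) (by norm_num)
    · intro n x hx
      have hxb : |x| ≤ δ := abs_le.mpr ⟨hx.1, hx.2⟩
      have : ‖coulombA L η n * x ^ n‖ = |coulombA L η n| * |x| ^ n := by
        rw [norm_mul, norm_pow]; rfl
      rw [this]
      calc |coulombA L η n| * |x| ^ n ≤ c ^ n * δ ^ n := by
            apply mul_le_mul (coulombA_le L η hL n) (pow_le_pow_left₀ (abs_nonneg _) hxb n)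
              (by positivity) (by positivity)
        _ = (c * δ) ^ n := by rw [mul_pow]
        _ = (1/2 : ℝ) ^ n := by
            congr 1
            rw [hδ]; field_simp
  have hmem : Set.Icc (-δ) δ ∈ nhds (0:ℝ) := Icc_mem_nhds (by linarith) hδp
  have h0 : ContinuousAt (fun x => ∑' n : ℕ, coulombA L η n * x ^ n) 0 :=
    (hcont 0 ⟨by linarith, hδp.le⟩).continuousAt hmem
  have hval : coulombF L η 0 = 1 := by
    unfold coulombF
    rw [tsum_eq_single 0]
    · simp [coulombA]
    · intro n hn
      simp [zero_pow hn]
  have := h0.tendsto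
  rw [show (fun x => ∑' n : ℕ, coulombA L η n * x ^ n) = coulombF L η from rfl] at this
  rwa [show (∑' n : ℕ, coulombA L η n * (0:ℝ) ^ n) = 1 from hval] at this

lemma coulombC_pos (L η : ℝ) (hL : -1 < L) : 0 < coulombC L η := by
  unfold coulombC
  apply div_pos
  · apply mul_pos (mul_pos (Real.rpow_pos_of_pos two_pos L) (Real.exp_pos _))
    apply norm_pos_iff.mpr
    apply Complex.Gamma_ne_zero_of_re_pos
    simp only [Complex.add_re, Complex.ofReal_re, Complex.one_re, Complex.mul_re,
      Complex.I_re, Complex.I_im, Complex.ofReal_im]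
    simp
    linarith
  · exact Real.Gamma_pos_of_pos (by linarith)

lemma abs_of_re_im (a b : ℝ) :
    ‖(a:ℂ) + (b:ℂ) * Complex.I‖ = Real.sqrt (a^2 + b^2) := by
  rw [Complex.norm_def, Complex.normSq_apply]
  simp [Complex.add_re, Complex.add_im, Complex.mul_re, Complex.mul_im]
  ring_nf

lemma coulombC_ratio (L η : ℝ) (hL : 0 < L) :
    coulombC (L-1) η * coulombC (L+1) η / coulombC L η ^ 2 =
      L * (2*L+1) * Real.sqrt ((L+1)^2+η^2) / ((L+1)*(2*L+3) * Real.sqrt (L^2+η^2)) := by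
  have hz : (L:ℂ) + (η:ℂ) * Complex.I ≠ 0 := by
    intro h
    have := congrArg Complex.re h
    simp at this
    linarith
  have hz1 : (L:ℂ) + (η:ℂ) * Complex.I + 1 ≠ 0 := by
    intro h
    have := congrArg Complex.re h
    simp at this
    linarith
  set gC := Complex.Gamma ((L:ℂ) + (η:ℂ) * Complex.I) with hgC
  have h1 : Complex.Gamma ((L:ℂ) + (η:ℂ) * Complex.I + 1) = ((L:ℂ) + (η:ℂ) * Complex.I) * gC :=
    Complex.Gamma_add_one _ hz
  have h2 : Complex.Gamma ((L:ℂ) + (η:ℂ) * Complex.I + 1 + 1) =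
      ((L:ℂ) + (η:ℂ) * Complex.I + 1) * (((L:ℂ) + (η:ℂ) * Complex.I) * gC) := by
    rw [Complex.Gamma_add_one _ hz1, h1]
  have e1 : ((L - 1 : ℝ):ℂ) + 1 + (η:ℂ) * Complex.I = (L:ℂ) + (η:ℂ) * Complex.I := by
    push_cast; ring
  have e2 : ((L : ℝ):ℂ) + 1 + (η:ℂ) * Complex.I = (L:ℂ) + (η:ℂ) * Complex.I + 1 := by ring
  have e3 : ((L + 1 : ℝ):ℂ) + 1 + (η:ℂ) * Complex.I = (L:ℂ) + (η:ℂ) * Complex.I + 1 + 1 := by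
    push_cast; ring
  have ha : ‖(L:ℂ) + (η:ℂ) * Complex.I‖ = Real.sqrt (L^2 + η^2) :=
    abs_of_re_im L η
  have ha1 : ‖(L:ℂ) + (η:ℂ) * Complex.I + 1‖ = Real.sqrt ((L+1)^2 + η^2) := by
    have : (L:ℂ) + (η:ℂ) * Complex.I + 1 = ((L+1:ℝ):ℂ) + (η:ℂ) * Complex.I := by push_cast; ring
    rw [this, abs_of_re_im]
  have hg2L : (0:ℝ) < Real.Gamma (2*L) := Real.Gamma_pos_of_pos (by linarith)
  have hr1 : (2:ℝ)*(L-1)+2 = 2*L := by ring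
  have hG1 : Real.Gamma (2*L+2) = (2*L+1)*((2*L)*Real.Gamma (2*L)) := by
    rw [show (2:ℝ)*L+2 = (2*L+1)+1 by ring, Real.Gamma_add_one (by linarith),
      show (2:ℝ)*L+1 = (2*L)+1 by ring, Real.Gamma_add_one (by linarith)]
  have hG2 : Real.Gamma (2*(L+1)+2) =
      (2*L+3)*((2*L+2)*((2*L+1)*((2*L)*Real.Gamma (2*L)))) := by
    rw [show (2:ℝ)*(L+1)+2 = (2*L+3)+1 by ring, Real.Gamma_add_one (by linarith),
      show (2:ℝ)*L+3 = (2*L+2)+1 by ring, Real.Gamma_add_one (by linarith), ← hG1]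
  have hp1 : (2:ℝ) ^ (L-1) = 2 ^ L / 2 := by
    rw [Real.rpow_sub two_pos, Real.rpow_one]
  have hp2 : (2:ℝ) ^ (L+1) = 2 ^ L * 2 := by
    rw [Real.rpow_add two_pos, Real.rpow_one]
  have hgCpos : 0 < ‖gC‖ := norm_pos_iff.mpr (by
    apply Complex.Gamma_ne_zero_of_re_pos
    simp [Complex.add_re, Complex.mul_re]
    linarith)
  have hs0 : (0:ℝ) < Real.sqrt (L^2+η^2) := Real.sqrt_pos.mpr (by positivity)
  have hs1 : (0:ℝ) < Real.sqrt ((L+1)^2+η^2) := Real.sqrt_pos.mpr (by positivity)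
  have h2L : (0:ℝ) < 2 ^ L := Real.rpow_pos_of_pos two_pos L
  have hE : (0:ℝ) < Real.exp (-(Real.pi * η / 2)) := Real.exp_pos _
  unfold coulombC
  rw [e1, e2, e3, h1, h2, ← hgC, hr1, hG1, hG2, hp1, hp2, norm_mul, norm_mul, ha, ha1]
  field_simp

lemma turan_aux (c1 c2 c3 p1 p2 p3 f1 f2 f3 : ℝ) (hc2 : c2 ≠ 0) (hp2 : p2 ≠ 0) (hf2 : f2 ≠ 0)
    (hp : p1 * p3 = p2^2) :
    ((c2*p2*f2)^2 - (c1*p1*f1)*(c3*p3*f3)) / (c2*p2*f2)^2 =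
      1 - c1*c3/c2^2 * (f1*f3/f2^2) := by
  field_simp
  linear_combination (-(c1*c3*f1*f3)) * hp

/-- The constant in the sharp Turán type inequality is best possible: the relative
Turánian tends to `1 - C_{L-1}(η) C_{L+1}(η) / C_L(η)²` as `ρ → 0⁺`. -/
theorem coulomb_turan_sharp_limit (L η : ℝ) (hL : 0 < L) :
    Filter.Tendsto
      (fun ρ : ℝ =>
        (coulombRegF L η ρ ^ 2 - coulombRegF (L - 1) η ρ * coulombRegF (L + 1) η ρ) /
          coulombRegF L η ρ ^ 2)
      (nhdsWithin 0 (Set.Ioi 0))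
      (nhds (1 - coulombC (L - 1) η * coulombC (L + 1) η / coulombC L η ^ 2)) ∧
    1 - coulombC (L - 1) η * coulombC (L + 1) η / coulombC L η ^ 2 =
      1 - L * (2 * L + 1) * Real.sqrt ((L + 1) ^ 2 + η ^ 2) /
        ((L + 1) * (2 * L + 3) * Real.sqrt (L ^ 2 + η ^ 2)) := by
  constructor
  · have hF1 : Filter.Tendsto (coulombF (L - 1) η) (nhdsWithin 0 (Set.Ioi 0)) (nhds 1) :=
      (coulombF_tendsto_one _ η (by linarith)).mono_left nhdsWithin_le_nhds
    have hF2 : Filter.Tendsto (coulombF L η) (nhdsWithin 0 (Set.Ioi 0)) (nhds 1) :=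
      (coulombF_tendsto_one _ η (by linarith)).mono_left nhdsWithin_le_nhds
    have hF3 : Filter.Tendsto (coulombF (L + 1) η) (nhdsWithin 0 (Set.Ioi 0)) (nhds 1) :=
      (coulombF_tendsto_one _ η (by linarith)).mono_left nhdsWithin_le_nhds
    have hmulF : Filter.Tendsto
        (fun ρ => coulombF (L - 1) η ρ * coulombF (L + 1) η ρ / coulombF L η ρ ^ 2)
        (nhdsWithin 0 (Set.Ioi 0)) (nhds 1) := by
      have h := ((hF1.mul hF3).div (hF2.pow 2) (by norm_num))
      norm_num at h
      exact h
    have htarget : Filter.Tendsto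
        (fun ρ => 1 - (coulombC (L - 1) η * coulombC (L + 1) η / coulombC L η ^ 2) *
          (coulombF (L - 1) η ρ * coulombF (L + 1) η ρ / coulombF L η ρ ^ 2))
        (nhdsWithin 0 (Set.Ioi 0))
        (nhds (1 - coulombC (L - 1) η * coulombC (L + 1) η / coulombC L η ^ 2)) := by
      have h := Filter.Tendsto.sub (tendsto_const_nhds (x := (1:ℝ)))
        ((tendsto_const_nhds (x := coulombC (L - 1) η * coulombC (L + 1) η / coulombC L η ^ 2)).mul hmulF)
      rw [mul_one] at h
      exact h
    apply htarget.congr'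
    have hne : ∀ᶠ ρ in nhdsWithin (0:ℝ) (Set.Ioi 0), coulombF L η ρ ≠ 0 :=
      hF2.eventually_ne one_ne_zero
    filter_upwards [hne, self_mem_nhdsWithin] with ρ h0 hρ
    have hρ0 : (0:ℝ) < ρ := hρ
    have hp2 : ρ ^ (L + 1) ≠ 0 := ne_of_gt (Real.rpow_pos_of_pos hρ0 _)
    have hprod : ρ ^ (L - 1 + 1) * ρ ^ (L + 1 + 1) = (ρ ^ (L + 1)) ^ 2 := by
      rw [← Real.rpow_natCast (ρ ^ (L + 1)) 2, ← Real.rpow_mul hρ0.le, ← Real.rpow_add hρ0]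
      congr 1
      push_cast
      ring
    simp only [coulombRegF]
    exact (turan_aux _ _ _ _ _ _ _ _ _ (coulombC_pos L η (by linarith)).ne' hp2 h0 hprod).symm
  · rw [coulombC_ratio L η hL]
end

section
/- Let L > −1/2 and η ∈ ℝ. If a, b ∈ Z_{L,η} with a < b, a·b > 0 (both positive or both negative), and no element of Z_{L,η} lies in the open interval (a,b), then there exists exactly one c ∈ (a,b) such that (L+1)·𝓕_L(η,c) + c·∂𝓕_L/∂ρ(η,c) = 0 (for c > 0 this condition is equivalent to F_L'(η,c) = 0, where the prime is the derivative in ρ). In other words, the zeros of ρ ↦ F_L(η,ρ) and of ρ ↦ F_L'(η,ρ) are interlacing. -/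
open Real

namespace CoulombProof


/-- Coefficient bound class: coefficients dominated by `A K^n / n!`. -/
def Bnd (c : ℕ → ℝ) : Prop :=
  ∃ A K : ℝ, 0 ≤ A ∧ 0 ≤ K ∧ ∀ n, |c n| ≤ A * K ^ n / n.factorial

lemma Bnd.summable_abs {c : ℕ → ℝ} (h : Bnd c) (x : ℝ) :
    Summable fun n : ℕ => |c n * x ^ n| := by
  obtain ⟨A, K, hA, hK, hc⟩ := h
  have hg : Summable fun n : ℕ => A * (K * |x|) ^ n / n.factorial := by
    simpa [mul_div_assoc] using (Real.summable_pow_div_factorial (K * |x|)).mul_left A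
  refine Summable.of_nonneg_of_le (fun n => abs_nonneg _) (fun n => ?_) hg
  calc |c n * x ^ n| = |c n| * |x| ^ n := by rw [abs_mul, abs_pow]
    _ ≤ A * K ^ n / n.factorial * |x| ^ n :=
        mul_le_mul_of_nonneg_right (hc n) (pow_nonneg (abs_nonneg x) n)
    _ = A * (K * |x|) ^ n / n.factorial := by rw [mul_pow]; ring

lemma Bnd.summable {c : ℕ → ℝ} (h : Bnd c) (x : ℝ) :
    Summable fun n : ℕ => c n * x ^ n :=
  (h.summable_abs x).of_abs

lemma Bnd.shiftUp {c : ℕ → ℝ} (h : Bnd c) : Bnd fun n : ℕ => ((n : ℝ) + 1) * c (n + 1) := by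
  obtain ⟨A, K, hA, hK, hc⟩ := h
  refine ⟨A * K, K, by positivity, hK, fun n => ?_⟩
  have h1 : |((n : ℝ) + 1) * c (n + 1)| = ((n : ℝ) + 1) * |c (n + 1)| := by
    rw [abs_mul, abs_of_pos (by positivity : (0:ℝ) < (n : ℝ) + 1)]
  rw [h1]
  have h2 := hc (n + 1)
  have hfac : (0:ℝ) < n.factorial := by exact_mod_cast n.factorial_pos
  calc ((n : ℝ) + 1) * |c (n + 1)| ≤ ((n : ℝ) + 1) * (A * K ^ (n + 1) / (n + 1).factorial) :=
      mul_le_mul_of_nonneg_left h2 (by positivity)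
    _ = A * K * K ^ n / n.factorial := by
        rw [Nat.factorial_succ]
        push_cast
        field_simp
        ring

/-- Prepend a zero to a coefficient sequence. -/
def sd (c : ℕ → ℝ) : ℕ → ℝ
  | 0 => 0
  | n + 1 => c n

lemma Bnd.sd {c : ℕ → ℝ} (h : Bnd c) : Bnd (CoulombProof.sd c) := by
  obtain ⟨A, K, hA, hK, hc⟩ := h
  refine ⟨A, 2 * K + 2, hA, by positivity, fun n => ?_⟩
  cases n with
  | zero => simpa [CoulombProof.sd] using hA
  | succ m =>
    have h1 := hc m
    have hfac : (0:ℝ) < m.factorial := by exact_mod_cast m.factorial_pos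
    have h2 : (K : ℝ) ^ m * ((m : ℝ) + 1) ≤ (2 * K + 2) ^ (m + 1) := by
      have e1 : (K : ℝ) ^ m ≤ (K + 1) ^ m := pow_le_pow_left₀ hK (by linarith) m
      have e2 : ((m : ℝ) + 1) ≤ 2 ^ (m + 1) := by
        have h3 := (Nat.lt_two_pow_self (n := m + 1))
        have h4 : ((m:ℝ) + 1) < 2 ^ (m + 1) := by exact_mod_cast h3
        linarith
      have e3 : (K + 1 : ℝ) ^ m ≤ (K + 1) ^ (m + 1) :=
        pow_le_pow_right₀ (by linarith) (Nat.le_succ m)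
      calc (K : ℝ) ^ m * ((m : ℝ) + 1) ≤ (K + 1) ^ m * 2 ^ (m + 1) :=
          mul_le_mul e1 e2 (by positivity) (by positivity)
        _ ≤ (K + 1) ^ (m + 1) * 2 ^ (m + 1) :=
            mul_le_mul_of_nonneg_right e3 (by positivity)
        _ = (2 * K + 2) ^ (m + 1) := by rw [← mul_pow]; ring_nf
    show |c m| ≤ A * (2 * K + 2) ^ (m + 1) / (m + 1).factorial
    calc |c m| ≤ A * K ^ m / m.factorial := h1
      _ ≤ A * (2 * K + 2) ^ (m + 1) / (m + 1).factorial := by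
          rw [div_le_div_iff₀ hfac (by exact_mod_cast (m+1).factorial_pos)]
          rw [Nat.factorial_succ]
          push_cast
          nlinarith [mul_le_mul_of_nonneg_left h2 hA, hfac,
            mul_nonneg hA (pow_nonneg hK m)]

lemma hasDerivAt_tsum_pow {c : ℕ → ℝ} (h : Bnd c) (x : ℝ) :
    HasDerivAt (fun y => ∑' n : ℕ, c n * y ^ n)
      (∑' n : ℕ, (((n : ℝ) + 1) * c (n + 1)) * x ^ n) x := by
  have hsum_all : ∀ y : ℝ, Summable fun n : ℕ => c n * y ^ n := fun y => h.summable y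
  obtain ⟨A, K, hA, hK, hc⟩ := h
  set R : ℝ := |x| + 1 with hR
  have hxR : x ∈ Metric.ball (0 : ℝ) R := by
    simp only [Metric.mem_ball, dist_zero_right, Real.norm_eq_abs, hR]
    linarith
  have hu : Summable fun n : ℕ => ((n : ℝ) + 1) * |c (n + 1)| * R ^ n := by
    have hg : Summable fun n : ℕ => (A * K) * (K * R) ^ n / n.factorial := by
      simpa [mul_div_assoc] using (Real.summable_pow_div_factorial (K * R)).mul_left (A * K)
    refine Summable.of_nonneg_of_le (fun n => by positivity) (fun n => ?_) hg
    have h2 := hc (n + 1)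
    have hfac : (0:ℝ) < n.factorial := by exact_mod_cast n.factorial_pos
    have hRpos : (0:ℝ) < R := by rw [hR]; positivity
    calc ((n : ℝ) + 1) * |c (n + 1)| * R ^ n
        ≤ ((n : ℝ) + 1) * (A * K ^ (n + 1) / (n + 1).factorial) * R ^ n := by
          apply mul_le_mul_of_nonneg_right _ (by positivity)
          exact mul_le_mul_of_nonneg_left h2 (by positivity)
      _ = (A * K) * (K * R) ^ n / n.factorial := by
          rw [Nat.factorial_succ, mul_pow]
          push_cast
          field_simp
          ring
  apply hasDerivAt_of_tendstoUniformlyOn (l := (Filter.atTop : Filter (Finset ℕ))) (Metric.isOpen_ball)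
    (f := fun (t : Finset ℕ) (y : ℝ) => c 0 + ∑ n ∈ t, c (n + 1) * y ^ (n + 1))
    (f' := fun (t : Finset ℕ) (y : ℝ) => ∑ n ∈ t, (((n : ℝ) + 1) * c (n + 1)) * y ^ n)
    ?_ ?_ ?_ hxR
  · apply tendstoUniformlyOn_tsum hu
    intro n y hy
    have hyR : |y| ≤ R := by
      simp only [Metric.mem_ball, dist_zero_right, Real.norm_eq_abs] at hy
      linarith
    calc ‖(((n : ℝ) + 1) * c (n + 1)) * y ^ n‖
        = (((n : ℝ) + 1) * |c (n + 1)|) * |y| ^ n := by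
          rw [Real.norm_eq_abs, abs_mul, abs_mul, abs_pow,
            abs_of_pos (by positivity : (0:ℝ) < (n : ℝ) + 1)]
      _ ≤ ((n : ℝ) + 1) * |c (n + 1)| * R ^ n := by
          apply mul_le_mul_of_nonneg_left _ (by positivity)
          exact pow_le_pow_left₀ (abs_nonneg y) hyR n
  · filter_upwards with t y hy
    apply HasDerivAt.const_add
    apply HasDerivAt.fun_sum
    intro n _
    have h3 := (hasDerivAt_pow (n + 1) y).const_mul (c (n + 1))
    refine h3.congr_deriv ?_
    push_cast [Nat.add_sub_cancel]
    ring
  · intro y hy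
    have h1 : Summable fun n : ℕ => c (n + 1) * y ^ (n + 1) :=
      (summable_nat_add_iff (f := fun n : ℕ => c n * y ^ n) 1).2 (hsum_all y)
    have h2 := h1.hasSum.const_add (c 0)
    have h4 : ∑' n : ℕ, c n * y ^ n = c 0 + ∑' n : ℕ, c (n + 1) * y ^ (n + 1) := by
      rw [Summable.tsum_eq_zero_add (hsum_all y)]
      simp
    rw [h4]
    exact h2


noncomputable def cA1 (L η : ℝ) : ℕ → ℝ := fun n => ((n : ℝ) + 1) * coulombA L η (n + 1)
noncomputable def cA2 (L η : ℝ) : ℕ → ℝ := fun n => ((n : ℝ) + 1) * cA1 L η (n + 1)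
noncomputable def cDF (L η : ℝ) : ℝ → ℝ := fun x => ∑' n : ℕ, cA1 L η n * x ^ n
noncomputable def cDDF (L η : ℝ) : ℝ → ℝ := fun x => ∑' n : ℕ, cA2 L η n * x ^ n
noncomputable def cG (L η : ℝ) : ℝ → ℝ := fun x => (L + 1) * coulombF L η x + x * cDF L η x
noncomputable def qq (L η : ℝ) : ℝ → ℝ := fun x => x ^ 2 - 2 * η * x - L * (L + 1)

lemma coulombA_two (L η : ℝ) (m : ℕ) :
    coulombA L η (m + 2) = (2 * η * coulombA L η (m + 1) - coulombA L η m) /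
      (((m : ℝ) + 2) * (((m : ℝ) + 2) + 2 * L + 1)) := rfl

lemma abs_coulombA_le (L η : ℝ) (hL : -1/2 < L) (n : ℕ) :
    |coulombA L η n| ≤ (2 * |η| + 2) ^ n / n.factorial := by
  set K : ℝ := 2 * |η| + 2 with hK
  have hη : (0:ℝ) ≤ |η| := abs_nonneg η
  have hK2 : (2:ℝ) ≤ K := by rw [hK]; linarith
  have hKpos : (0:ℝ) < K := by linarith
  have hL1 : (1:ℝ)/2 < L + 1 := by linarith
  have base0 : |coulombA L η 0| ≤ K ^ 0 / (0:ℕ).factorial := by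
    show |(1:ℝ)| ≤ K ^ 0 / (0:ℕ).factorial
    norm_num
  have base1 : |coulombA L η 1| ≤ K ^ 1 / (1:ℕ).factorial := by
    show |η / (L + 1)| ≤ K ^ 1 / (1:ℕ).factorial
    rw [abs_div, abs_of_pos (by linarith : (0:ℝ) < L + 1)]
    rw [div_le_iff₀ (by linarith : (0:ℝ) < L + 1)]
    have : K ^ 1 / ((1:ℕ).factorial : ℝ) = K := by norm_num
    rw [this]
    nlinarith [abs_nonneg η]
  have H : ∀ n : ℕ, |coulombA L η n| ≤ K ^ n / n.factorial ∧
      |coulombA L η (n+1)| ≤ K ^ (n+1) / (n+1).factorial := by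
    intro n
    induction n with
    | zero => exact ⟨base0, base1⟩
    | succ m ih =>
      refine ⟨ih.2, ?_⟩
      have ih1 := ih.1
      have ih2 := ih.2
      have hm2 : (0:ℝ) < (m:ℝ) + 2 := by positivity
      have hden : (0:ℝ) < ((m:ℝ) + 2) * (((m:ℝ) + 2) + 2 * L + 1) := by
        apply mul_pos hm2; push_cast; linarith [Nat.cast_nonneg (α := ℝ) m]
      have hnum : |2 * η * coulombA L η (m+1) - coulombA L η m| ≤
          2 * |η| * |coulombA L η (m+1)| + |coulombA L η m| := by
        calc |2 * η * coulombA L η (m+1) - coulombA L η m|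
            ≤ |2 * η * coulombA L η (m+1)| + |coulombA L η m| := abs_sub _ _
          _ = 2 * |η| * |coulombA L η (m+1)| + |coulombA L η m| := by
              rw [abs_mul, abs_mul]; norm_num
      rw [coulombA_two, abs_div, abs_of_pos hden]
      have hfm : (0:ℝ) < m.factorial := by exact_mod_cast m.factorial_pos
      have hfm1 : (0:ℝ) < (m+1).factorial := by exact_mod_cast (m+1).factorial_pos
      have hfm2 : (0:ℝ) < (m+2).factorial := by exact_mod_cast (m+2).factorial_pos
      have step1 : |2 * η * coulombA L η (m+1) - coulombA L η m| ≤
          2 * |η| * (K ^ (m+1) / (m+1).factorial) + K ^ m / m.factorial := by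
        calc |2 * η * coulombA L η (m+1) - coulombA L η m|
            ≤ 2 * |η| * |coulombA L η (m+1)| + |coulombA L η m| := hnum
          _ ≤ 2 * |η| * (K ^ (m+1) / (m+1).factorial) + K ^ m / m.factorial := by
              have := mul_le_mul_of_nonneg_left ih2 (by positivity : (0:ℝ) ≤ 2 * |η|)
              linarith
      have hden2 : ((m:ℝ) + 2) * ((m:ℝ) + 2) ≤ ((m:ℝ) + 2) * (((m:ℝ) + 2) + 2 * L + 1) := by
        apply mul_le_mul_of_nonneg_left _ hm2.le
        linarith
      -- key numeric inequality: 2|η| K^{m+1} + (m+1) K^m ≤ (m+2) K^{m+2}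
      have key : 2 * |η| * K ^ (m+1) + ((m:ℝ)+1) * K ^ m ≤ ((m:ℝ)+2) * K ^ (m+2) := by
        have e1 : 2 * |η| * K ^ (m+1) ≤ K * K ^ (m+1) := by
          apply mul_le_mul_of_nonneg_right _ (by positivity)
          linarith
        have e2 : ((m:ℝ)+1) * K ^ m ≤ ((m:ℝ)+1) * K ^ (m+2) := by
          apply mul_le_mul_of_nonneg_left _ (by positivity)
          calc K ^ m = K ^ m * 1 * 1 := by ring
            _ ≤ K ^ m * K * K := by
                apply mul_le_mul _ (by linarith) (by norm_num) (by positivity)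
                apply mul_le_mul_of_nonneg_left (by linarith) (by positivity)
            _ = K ^ (m+2) := by ring
        have e3 : K * K ^ (m+1) = K ^ (m+2) := by ring
        nlinarith [pow_nonneg hKpos.le (m+2)]
      calc |2 * η * coulombA L η (m+1) - coulombA L η m| /
            (((m:ℝ) + 2) * (((m:ℝ) + 2) + 2 * L + 1))
          ≤ (2 * |η| * (K ^ (m+1) / (m+1).factorial) + K ^ m / m.factorial) /
            (((m:ℝ) + 2) * ((m:ℝ) + 2)) := by
            apply div_le_div₀ (by positivity) step1 (by positivity) hden2
        _ ≤ K ^ (m+2) / (m+2).factorial := by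
            rw [div_le_div_iff₀ (by positivity) hfm2]
            have hfact2 : ((m+2).factorial : ℝ) = ((m:ℝ)+2) * (((m:ℝ)+1) * m.factorial) := by
              rw [Nat.factorial_succ, Nat.factorial_succ]
              push_cast; ring
            have hfact1 : ((m+1).factorial : ℝ) = ((m:ℝ)+1) * m.factorial := by
              rw [Nat.factorial_succ]; push_cast; ring
            rw [hfact2, hfact1]
            have expand : (2 * |η| * (K ^ (m+1) / (((m:ℝ)+1) * m.factorial)) +
                K ^ m / m.factorial) * (((m:ℝ)+2) * (((m:ℝ)+1) * m.factorial))
                = (2 * |η| * K ^ (m+1) + ((m:ℝ)+1) * K ^ m) * ((m:ℝ)+2) := by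
              field_simp
            rw [expand]
            calc (2 * |η| * K ^ (m+1) + ((m:ℝ)+1) * K ^ m) * ((m:ℝ)+2)
                ≤ (((m:ℝ)+2) * K ^ (m+2)) * ((m:ℝ)+2) :=
                  mul_le_mul_of_nonneg_right key (by positivity)
              _ = K ^ (m+2) * (((m:ℝ)+2) * ((m:ℝ)+2)) := by ring
  exact (H n).1

lemma bnd_A (L η : ℝ) (hL : -1/2 < L) : Bnd (coulombA L η) :=
  ⟨1, 2 * |η| + 2, zero_le_one, by positivity,
    fun n => by simpa using abs_coulombA_le L η hL n⟩

lemma bnd_A1 (L η : ℝ) (hL : -1/2 < L) : Bnd (cA1 L η) := (bnd_A L η hL).shiftUp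

lemma bnd_A2 (L η : ℝ) (hL : -1/2 < L) : Bnd (cA2 L η) := (bnd_A1 L η hL).shiftUp

lemma hasDerivAt_F (L η : ℝ) (hL : -1/2 < L) (x : ℝ) :
    HasDerivAt (coulombF L η) (cDF L η x) x :=
  hasDerivAt_tsum_pow (bnd_A L η hL) x

lemma hasDerivAt_DF (L η : ℝ) (hL : -1/2 < L) (x : ℝ) :
    HasDerivAt (cDF L η) (cDDF L η x) x :=
  hasDerivAt_tsum_pow (bnd_A1 L η hL) x

lemma deriv_F (L η : ℝ) (hL : -1/2 < L) (x : ℝ) :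
    deriv (coulombF L η) x = cDF L η x :=
  (hasDerivAt_F L η hL x).deriv

lemma continuous_F (L η : ℝ) (hL : -1/2 < L) : Continuous (coulombF L η) := by
  have hdiff : Differentiable ℝ (coulombF L η) := fun x => (hasDerivAt_F L η hL x).differentiableAt
  exact hdiff.continuous

lemma continuous_DF (L η : ℝ) (hL : -1/2 < L) : Continuous (cDF L η) := by
  have hdiff : Differentiable ℝ (cDF L η) := fun x => (hasDerivAt_DF L η hL x).differentiableAt
  exact hdiff.continuous

lemma continuous_G (L η : ℝ) (hL : -1/2 < L) : Continuous (cG L η) := by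
  unfold cG
  exact (continuous_const.mul (continuous_F L η hL)).add (continuous_id.mul (continuous_DF L η hL))

lemma F_at_zero (L η : ℝ) : coulombF L η 0 = 1 := by
  unfold coulombF
  rw [tsum_eq_single 0 (fun n hn => ?_)]
  · show coulombA L η 0 * 0 ^ 0 = 1
    show (1:ℝ) * 0 ^ 0 = 1
    norm_num
  · rw [zero_pow hn, mul_zero]

lemma Ezero (L η : ℝ) (hL : -1/2 < L) (n : ℕ) :
    sd (cA2 L η) n + 2 * (L + 1) * cA1 L η n + sd (coulombA L η) n
      - 2 * η * coulombA L η n = 0 := by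
  have hL1 : (0:ℝ) < L + 1 := by linarith
  cases n with
  | zero =>
    have h1 : coulombA L η 1 = η / (L + 1) := rfl
    have h0 : coulombA L η 0 = 1 := rfl
    show (0:ℝ) + 2 * (L + 1) * cA1 L η 0 + 0 - 2 * η * coulombA L η 0 = 0
    unfold cA1
    rw [h1, h0]
    push_cast
    field_simp
    ring
  | succ m =>
    show cA2 L η m + 2 * (L + 1) * cA1 L η (m+1) + coulombA L η m
      - 2 * η * coulombA L η (m+1) = 0
    unfold cA2 cA1
    rw [coulombA_two L η m]
    have hden : ((m:ℝ) + 2) * (((m:ℝ) + 2) + 2 * L + 1) ≠ 0 := by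
      have : (0:ℝ) < ((m:ℝ) + 2) * (((m:ℝ) + 2) + 2 * L + 1) := by
        apply mul_pos (by positivity)
        have : (0:ℝ) ≤ (m:ℝ) := Nat.cast_nonneg m
        linarith
      linarith
    have hden1 : ((m:ℝ) + 2) ≠ 0 := by positivity
    have hden2 : (((m:ℝ) + 2) + 2 * L + 1) ≠ 0 := fun h => hden (by rw [h, mul_zero])
    push_cast
    field_simp
    ring

lemma ode (L η : ℝ) (hL : -1/2 < L) (x : ℝ) :
    x * cDDF L η x + 2 * (L + 1) * cDF L η x + (x - 2 * η) * coulombF L η x = 0 := by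
  have hA := bnd_A L η hL
  have hA1 := bnd_A1 L η hL
  have hA2 := bnd_A2 L η hL
  have hsdA := hA.sd
  have hsdA2 := hA2.sd
  have e1 : ∑' n : ℕ, sd (cA2 L η) n * x ^ n = x * cDDF L η x := by
    rw [Summable.tsum_eq_zero_add (hsdA2.summable x)]
    simp only [sd, pow_zero, zero_mul, zero_add]
    unfold cDDF
    rw [← tsum_mul_left]
    exact tsum_congr fun n => by ring
  have e2 : ∑' n : ℕ, sd (coulombA L η) n * x ^ n = x * coulombF L η x := by
    rw [Summable.tsum_eq_zero_add (hsdA.summable x)]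
    simp only [sd, pow_zero, zero_mul, zero_add]
    unfold coulombF
    rw [← tsum_mul_left]
    exact tsum_congr fun n => by ring
  have e3 : ∑' n : ℕ, (2 * (L + 1) * cA1 L η n) * x ^ n = 2 * (L + 1) * cDF L η x := by
    unfold cDF
    rw [← tsum_mul_left]
    exact tsum_congr fun n => by ring
  have e4 : ∑' n : ℕ, (2 * η * coulombA L η n) * x ^ n = 2 * η * coulombF L η x := by
    unfold coulombF
    rw [← tsum_mul_left]
    exact tsum_congr fun n => by ring
  have S1 := hsdA2.summable x
  have S2 : Summable fun n : ℕ => (2 * (L + 1) * cA1 L η n) * x ^ n := by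
    have := (hA1.summable x).mul_left (2 * (L + 1))
    refine this.congr fun n => by ring
  have S3 := hsdA.summable x
  have S4 : Summable fun n : ℕ => (2 * η * coulombA L η n) * x ^ n := by
    have := (hA.summable x).mul_left (2 * η)
    refine this.congr fun n => by ring
  have split : (∑' n : ℕ, sd (cA2 L η) n * x ^ n) + (∑' n : ℕ, (2 * (L + 1) * cA1 L η n) * x ^ n)
      + (∑' n : ℕ, sd (coulombA L η) n * x ^ n) - (∑' n : ℕ, (2 * η * coulombA L η n) * x ^ n)
      = ∑' n : ℕ, (sd (cA2 L η) n * x ^ n + (2 * (L + 1) * cA1 L η n) * x ^ n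
          + sd (coulombA L η) n * x ^ n - (2 * η * coulombA L η n) * x ^ n) := by
    rw [← Summable.tsum_add S1 S2, ← Summable.tsum_add (S1.add S2) S3, ← Summable.tsum_sub ((S1.add S2).add S3) S4]
  have zero : ∑' n : ℕ, (sd (cA2 L η) n * x ^ n + (2 * (L + 1) * cA1 L η n) * x ^ n
      + sd (coulombA L η) n * x ^ n - (2 * η * coulombA L η n) * x ^ n) = 0 := by
    have h0 : ∀ n : ℕ, sd (cA2 L η) n * x ^ n + (2 * (L + 1) * cA1 L η n) * x ^ n
        + sd (coulombA L η) n * x ^ n - (2 * η * coulombA L η n) * x ^ n = 0 := by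
      intro n
      have h := Ezero L η hL n
      linear_combination x ^ n * h
    rw [tsum_congr h0]
    exact tsum_zero
  linear_combination (-1 : ℝ) * e1 - e3 - e2 + e4 + split + zero

lemma hasDerivAt_G (L η : ℝ) (hL : -1/2 < L) (x : ℝ) :
    HasDerivAt (cG L η) ((L + 2) * cDF L η x + x * cDDF L η x) x := by
  have h1 := (hasDerivAt_F L η hL x).const_mul (L + 1)
  have h2 := (hasDerivAt_id x).mul (hasDerivAt_DF L η hL x)
  have h3 := h1.add h2
  have he : cG L η = fun y => (L + 1) * coulombF L η y + id y * cDF L η y := rfl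
  rw [he]
  refine h3.congr_deriv ?_
  simp only [id]
  ring

lemma G_deriv_key (L η : ℝ) (hL : -1/2 < L) (x : ℝ) :
    x * ((L + 2) * cDF L η x + x * cDDF L η x)
      = -L * cG L η x - qq L η x * coulombF L η x := by
  have h := ode L η hL x
  unfold cG qq
  linear_combination x * h

lemma G_at_zero (L η : ℝ) : cG L η 0 = L + 1 := by
  unfold cG
  rw [F_at_zero]
  ring

lemma tendsto_slope_left {f : ℝ → ℝ} {d z : ℝ} (hd : HasDerivAt f d z) :
    Filter.Tendsto (slope f z) (nhdsWithin z (Set.Iio z)) (nhds d) := by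
  rw [hasDerivAt_iff_tendsto_slope] at hd
  exact hd.mono_left (nhdsWithin_mono _ fun t ht => ne_of_lt ht)

lemma tendsto_slope_right {f : ℝ → ℝ} {d z : ℝ} (hd : HasDerivAt f d z) :
    Filter.Tendsto (slope f z) (nhdsWithin z (Set.Ioi z)) (nhds d) := by
  rw [hasDerivAt_iff_tendsto_slope] at hd
  exact hd.mono_left (nhdsWithin_mono _ fun t ht => ne_of_gt ht)

lemma deriv_nonpos_of_left_pos {f : ℝ → ℝ} {d z w : ℝ} (hw : w < z)
    (hd : HasDerivAt f d z) (hfz : f z = 0)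
    (hpos : ∀ t, w < t → t < z → 0 < f t) : d ≤ 0 := by
  refine le_of_tendsto (tendsto_slope_left hd) ?_
  filter_upwards [Ioo_mem_nhdsLT_of_mem (Set.mem_Ioc.2 ⟨hw, le_refl z⟩)] with t ht
  have h1 := hpos t ht.1 ht.2
  have h2 : t - z ≤ 0 := by linarith [ht.2]
  rw [slope_def_field, hfz, sub_zero]
  exact div_nonpos_iff.2 (Or.inl ⟨h1.le, h2⟩)

lemma deriv_nonneg_of_left_neg {f : ℝ → ℝ} {d z w : ℝ} (hw : w < z)
    (hd : HasDerivAt f d z) (hfz : f z = 0)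
    (hneg : ∀ t, w < t → t < z → f t < 0) : 0 ≤ d := by
  refine ge_of_tendsto (tendsto_slope_left hd) ?_
  filter_upwards [Ioo_mem_nhdsLT_of_mem (Set.mem_Ioc.2 ⟨hw, le_refl z⟩)] with t ht
  have h1 := hneg t ht.1 ht.2
  have h2 : t - z ≤ 0 := by linarith [ht.2]
  rw [slope_def_field, hfz, sub_zero]
  exact div_nonneg_iff.2 (Or.inr ⟨h1.le, h2⟩)

lemma exists_neg_right {f : ℝ → ℝ} {d c b : ℝ} (hd : HasDerivAt f d c) (hneg : d < 0)
    (hfc : f c = 0) (hcb : c < b) : ∃ t, t ∈ Set.Ioo c b ∧ f t < 0 := by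
  have h3 : ∀ᶠ t in nhdsWithin c (Set.Ioi c), slope f c t < 0 :=
    (tendsto_slope_right hd).eventually_lt_const hneg
  have h4 : Set.Ioo c b ∈ nhdsWithin c (Set.Ioi c) :=
    Ioo_mem_nhdsGT_of_mem (Set.mem_Ico.2 ⟨le_refl c, hcb⟩)
  obtain ⟨t, hts, htI⟩ := (h3.and (Filter.eventually_of_mem h4 fun t ht => ht)).exists
  refine ⟨t, htI, ?_⟩
  rw [slope_def_field, hfc, sub_zero] at hts
  have h6 : 0 < t - c := by linarith [htI.1]
  rcases div_neg_iff.1 hts with ⟨h, _⟩ | ⟨h, h'⟩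
  · linarith
  · exact h

lemma sign_propagate {f : ℝ → ℝ} (hc : Continuous f) {s t : ℝ} (hst : s ≤ t)
    (hns : ∀ u, s ≤ u → u ≤ t → f u ≠ 0) : (0 < f s ↔ 0 < f t) := by
  constructor
  · intro hs
    by_contra h
    push_neg at h
    obtain ⟨u, hu, hu0⟩ := intermediate_value_Icc' hst hc.continuousOn
      (Set.mem_Icc.2 ⟨h, hs.le⟩)
    exact hns u hu.1 hu.2 hu0
  · intro ht
    by_contra h
    push_neg at h
    obtain ⟨u, hu, hu0⟩ := intermediate_value_Icc hst hc.continuousOn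
      (Set.mem_Icc.2 ⟨h, ht.le⟩)
    exact hns u hu.1 hu.2 hu0

lemma at_most_one_zero {f f' : ℝ → ℝ} (hf : ∀ x, HasDerivAt f (f' x) x)
    {c₁ c₂ : ℝ} (h12 : c₁ < c₂) (h1 : f c₁ = 0) (h2 : f c₂ = 0)
    (hd : ∀ t, c₁ ≤ t → t ≤ c₂ → f t = 0 → f' t < 0) : False := by
  have hcont : Continuous f := by
    have hdiff : Differentiable ℝ f := fun x => (hf x).differentiableAt
    exact hdiff.continuous
  obtain ⟨t₀, ht₀I, ht₀⟩ := exists_neg_right (hf c₁) (hd c₁ le_rfl h12.le h1) h1 h12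
  set S : Set ℝ := Set.Icc t₀ c₂ ∩ {t | f t = 0} with hS
  have hSclosed : IsClosed S := isClosed_Icc.inter (isClosed_eq hcont continuous_const)
  have hSne : S.Nonempty := ⟨c₂, ⟨ht₀I.2.le, le_rfl⟩, h2⟩
  have hSbdd : BddBelow S := ⟨t₀, fun u hu => hu.1.1⟩
  set z := sInf S with hz
  have hzS : z ∈ S := hSclosed.csInf_mem hSne hSbdd
  have ht₀z : t₀ < z := by
    rcases eq_or_lt_of_le hzS.1.1 with h | h
    · exact absurd (h ▸ hzS.2) (ne_of_lt ht₀)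
    · exact h
  have hfneg : ∀ t, t₀ ≤ t → t < z → f t < 0 := by
    intro t h1t h2t
    have htc₂ : t ≤ c₂ := le_trans h2t.le hzS.1.2
    rcases lt_trichotomy (f t) 0 with h | h | h
    · exact h
    · exact absurd (csInf_le hSbdd ⟨⟨h1t, htc₂⟩, h⟩) (not_le.2 h2t)
    · exfalso
      obtain ⟨u, hu, hu0⟩ := intermediate_value_Icc h1t hcont.continuousOn
        (Set.mem_Icc.2 ⟨ht₀.le, h.le⟩)
      have : z ≤ u := csInf_le hSbdd ⟨⟨hu.1, le_trans hu.2 htc₂⟩, hu0⟩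
      linarith [hu.2]
  have hge := deriv_nonneg_of_left_neg ht₀z (hf z) hzS.2 fun t ha hb => hfneg t ha.le hb
  have hlt := hd z (le_trans ht₀I.1.le ht₀z.le) hzS.1.2 hzS.2
  linarith
lemma no_zero_in_nonosc (L η : ℝ) (hL : -1/2 < L) {x z₀ : ℝ} (hz₀ : 0 < z₀)
    (hzx : z₀ ≤ x) (hqx : qq L η x ≤ 0) (hF0 : coulombF L η z₀ = 0) : False := by
  have hFcont := continuous_F L η hL
  have hF1 : coulombF L η 0 = 1 := F_at_zero L η
  have hxpos : 0 < x := lt_of_lt_of_le hz₀ hzx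
  -- F is positive near 0
  have hev : ∀ᶠ t in nhds (0:ℝ), 0 < coulombF L η t := by
    have h := hFcont.tendsto 0
    rw [hF1] at h
    exact h.eventually_const_lt one_pos
  obtain ⟨ε, hε, hball⟩ := Metric.eventually_nhds_iff.1 hev
  set e : ℝ := min (ε/2) (z₀/2) with he
  have he0 : 0 < e := lt_min (by linarith) (by linarith)
  have hez : e < z₀ := lt_of_le_of_lt (min_le_right _ _) (by linarith)
  have hFpos_e : ∀ t, 0 ≤ t → t ≤ e → 0 < coulombF L η t := by
    intro t h1 h2
    apply hball
    rw [Real.dist_eq, sub_zero, abs_of_nonneg h1]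
    have : e ≤ ε/2 := min_le_left _ _
    linarith
  -- the smallest zero z in (0, z₀]
  set S : Set ℝ := Set.Icc e z₀ ∩ {t | coulombF L η t = 0} with hS
  have hSclosed : IsClosed S := isClosed_Icc.inter (isClosed_eq hFcont continuous_const)
  have hSne : S.Nonempty := ⟨z₀, ⟨hez.le, le_rfl⟩, hF0⟩
  have hSbdd : BddBelow S := ⟨e, fun u hu => hu.1.1⟩
  set z := sInf S with hzdef
  have hzS : z ∈ S := hSclosed.csInf_mem hSne hSbdd
  have hz0 : 0 < z := lt_of_lt_of_le he0 hzS.1.1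
  have hzz₀ : z ≤ z₀ := hzS.1.2
  have hzx' : z ≤ x := le_trans hzz₀ hzx
  have hFz : coulombF L η z = 0 := hzS.2
  have Fpos : ∀ t, 0 ≤ t → t < z → 0 < coulombF L η t := by
    intro t ht1 ht2
    rcases le_or_gt t e with h | h
    · exact hFpos_e t ht1 h
    · have hns : ∀ u, e ≤ u → u ≤ t → coulombF L η u ≠ 0 := by
        intro u hu1 hu2 hu0
        have huz : z ≤ u := csInf_le hSbdd ⟨⟨hu1, by linarith⟩, hu0⟩
        linarith
      exact (sign_propagate hFcont h.le hns).1 (hFpos_e e he0.le le_rfl)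
  -- derivative of u(t) = t^(L+1) F(t) and of w(t) = t^L G(t)
  have hasDerivAt_u : ∀ t : ℝ, 0 < t →
      HasDerivAt (fun s => s ^ (L+1) * coulombF L η s) (t ^ L * cG L η t) t := by
    intro t ht
    have h1 := Real.hasDerivAt_rpow_const (x := t) (p := L+1) (Or.inl ht.ne')
    have h3 := h1.mul (hasDerivAt_F L η hL t)
    refine h3.congr_deriv (Eq.symm ?_)
    have hpow : t ^ (L+1) = t ^ L * t := by
      rw [← Real.rpow_add_one ht.ne' L]
    have hpow2 : t ^ (L+1-1) = t ^ L := by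
      rw [show L+1-1 = L by ring]
    rw [hpow2, hpow]
    unfold cG
    ring
  have hasDerivAt_w : ∀ t : ℝ, 0 < t →
      HasDerivAt (fun s => s ^ L * cG L η s)
        (t ^ (L-1) * (-(qq L η t) * coulombF L η t)) t := by
    intro t ht
    have h1 := Real.hasDerivAt_rpow_const (x := t) (p := L) (Or.inl ht.ne')
    have h3 := h1.mul (hasDerivAt_G L η hL t)
    refine h3.congr_deriv (Eq.symm ?_)
    have key := G_deriv_key L η hL t
    have hpow : t ^ L = t ^ (L-1) * t := by
      rw [← Real.rpow_add_one ht.ne' (L-1), show L-1+1 = L by ring]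
    rw [hpow]
    linear_combination (-(t ^ (L-1))) * key
  rcases le_or_gt 0 (L * (L + 1)) with hcase | hcase
  · -- case A: q ≤ 0 on all of [0, x]
    have hqz : ∀ t, 0 ≤ t → t ≤ x → qq L η t ≤ 0 := by
      intro t h1 h2
      unfold qq at hqx ⊢
      nlinarith [mul_nonneg h1 (neg_nonneg.2 hqx),
        mul_nonneg (mul_nonneg (sub_nonneg.2 h2) h1) hxpos.le,
        mul_nonneg (sub_nonneg.2 h2) hcase]
    -- pick δ with 0 < δ < z and G δ > 0
    have hGcont := continuous_G L η hL
    have hevG : ∀ᶠ t in nhds (0:ℝ), 0 < cG L η t := by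
      have h := hGcont.tendsto 0
      rw [G_at_zero] at h
      exact h.eventually_const_lt (by linarith)
    obtain ⟨ε', hε', hballG⟩ := Metric.eventually_nhds_iff.1 hevG
    set δ : ℝ := min (ε'/2) (z/2) with hδ
    have hδ0 : 0 < δ := lt_min (by linarith) (by linarith)
    have hδz : δ < z := lt_of_le_of_lt (min_le_right _ _) (by linarith)
    have hGδ : 0 < cG L η δ := by
      apply hballG
      rw [Real.dist_eq, sub_zero, abs_of_nonneg hδ0.le]
      have : δ ≤ ε'/2 := min_le_left _ _
      linarith
    -- w is monotone on [δ, z]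
    have hwmono : MonotoneOn (fun s => s ^ L * cG L η s) (Set.Icc δ z) := by
      apply monotoneOn_of_deriv_nonneg (convex_Icc δ z)
      · intro t ht
        exact ((hasDerivAt_w t (lt_of_lt_of_le hδ0 ht.1)).continuousAt).continuousWithinAt
      · intro t ht
        rw [interior_Icc] at ht
        exact ((hasDerivAt_w t (lt_trans hδ0 ht.1)).differentiableAt).differentiableWithinAt
      · intro t ht
        rw [interior_Icc] at ht
        have htpos : 0 < t := lt_trans hδ0 ht.1
        rw [(hasDerivAt_w t htpos).deriv]
        apply mul_nonneg (Real.rpow_nonneg htpos.le _)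
        apply mul_nonneg
        · exact neg_nonneg.2 (hqz t htpos.le (by linarith [ht.2]))
        · exact (Fpos t htpos.le ht.2).le
    -- u is strictly monotone on [δ, z]
    have humono : StrictMonoOn (fun s => s ^ (L+1) * coulombF L η s) (Set.Icc δ z) := by
      apply strictMonoOn_of_deriv_pos (convex_Icc δ z)
      · intro t ht
        exact ((hasDerivAt_u t (lt_of_lt_of_le hδ0 ht.1)).continuousAt).continuousWithinAt
      · intro t ht
        rw [interior_Icc] at ht
        have htpos : 0 < t := lt_trans hδ0 ht.1
        rw [(hasDerivAt_u t htpos).deriv]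
        have hwδ : 0 < δ ^ L * cG L η δ := mul_pos (Real.rpow_pos_of_pos hδ0 L) hGδ
        have hle := hwmono (Set.mem_Icc.2 ⟨le_rfl, hδz.le⟩)
          (Set.mem_Icc.2 ⟨ht.1.le, ht.2.le⟩) ht.1.le
        exact lt_of_lt_of_le hwδ hle
    have h1 : δ ^ (L+1) * coulombF L η δ < z ^ (L+1) * coulombF L η z :=
      humono (Set.mem_Icc.2 ⟨le_rfl, hδz.le⟩) (Set.mem_Icc.2 ⟨hδz.le, le_rfl⟩) hδz
    have huδ : 0 < δ ^ (L+1) * coulombF L η δ :=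
      mul_pos (Real.rpow_pos_of_pos hδ0 _) (Fpos δ hδ0.le hδz)
    rw [hFz, mul_zero] at h1
    linarith
  · -- case B: L(L+1) < 0, use comparison with t^(L+1); here x < 2η
    have hx2η : x < 2*η := by
      by_contra h
      push_neg at h
      have h2 : 0 ≤ x * (x - 2*η) := mul_nonneg hxpos.le (by linarith)
      unfold qq at hqx
      nlinarith
    -- W(t) = t^(2L+2) * DF(t)
    have hasDerivAt_W : ∀ t : ℝ, 0 < t →
        HasDerivAt (fun s => s ^ (2*L+2) * cDF L η s)
          (t ^ (2*L+1) * ((2*η - t) * coulombF L η t)) t := by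
      intro t ht
      have h1 := Real.hasDerivAt_rpow_const (x := t) (p := 2*L+2) (Or.inl ht.ne')
      have h3 := h1.mul (hasDerivAt_DF L η hL t)
      refine h3.congr_deriv (Eq.symm ?_)
      have hode := ode L η hL t
      have hpow : t ^ (2*L+2) = t ^ (2*L+1) * t := by
        rw [← Real.rpow_add_one ht.ne' (2*L+1), show 2*L+1+1 = 2*L+2 by ring]
      have hpow2 : t ^ (2*L+2-1) = t ^ (2*L+1) := by
        rw [show 2*L+2-1 = 2*L+1 by ring]
      rw [hpow2, hpow]
      linear_combination (-(t ^ (2*L+1))) * hode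
    have hWmono : StrictMonoOn (fun s => s ^ (2*L+2) * cDF L η s) (Set.Ioc 0 z) := by
      apply strictMonoOn_of_deriv_pos (convex_Ioc 0 z)
      · intro t ht
        exact ((hasDerivAt_W t ht.1).continuousAt).continuousWithinAt
      · intro t ht
        rw [interior_Ioc] at ht
        rw [(hasDerivAt_W t ht.1).deriv]
        apply mul_pos (Real.rpow_pos_of_pos ht.1 _)
        apply mul_pos
        · have : t < z := ht.2
          linarith [hzx', hx2η]
        · exact Fpos t ht.1.le ht.2
    have htend : Filter.Tendsto (fun s => s ^ (2*L+2) * cDF L η s)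
        (nhdsWithin 0 (Set.Ioi 0)) (nhds 0) := by
      have l1 : Filter.Tendsto (fun s : ℝ => s ^ (2*L+2)) (nhds 0) (nhds 0) := by
        have hc := Real.continuousAt_rpow_const 0 (2*L+2) (Or.inr (by linarith))
        have h0 : (0:ℝ) ^ (2*L+2) = 0 := Real.zero_rpow (by linarith)
        have := hc.tendsto
        rw [h0] at this
        exact this
      have l2 := (continuous_DF L η hL).tendsto 0
      have l3 := l1.mul l2
      rw [zero_mul] at l3
      exact l3.mono_left nhdsWithin_le_nhds
    have hmemz2 : z/2 ∈ Set.Ioc (0:ℝ) z := ⟨by linarith, by linarith⟩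
    have hmemz : z ∈ Set.Ioc (0:ℝ) z := ⟨hz0, le_rfl⟩
    have hW2 : 0 ≤ (z/2) ^ (2*L+2) * cDF L η (z/2) := by
      apply le_of_tendsto htend
      filter_upwards [Ioo_mem_nhdsGT_of_mem
        (Set.mem_Ico.2 ⟨le_refl (0:ℝ), show (0:ℝ) < z/2 by linarith⟩)] with t ht
      exact (hWmono ⟨ht.1, by linarith [ht.2]⟩ hmemz2 ht.2).le
    have hWz : 0 < z ^ (2*L+2) * cDF L η z :=
      lt_of_le_of_lt hW2 (hWmono hmemz2 hmemz (by linarith))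
    have hDFz : 0 < cDF L η z := by
      by_contra h
      push_neg at h
      have := mul_nonpos_of_nonneg_of_nonpos (Real.rpow_nonneg hz0.le (2*L+2)) h
      linarith
    have hDFz' : cDF L η z ≤ 0 :=
      deriv_nonpos_of_left_pos hz0 (hasDerivAt_F L η hL z) hFz
        (fun t h1 h2 => Fpos t h1.le h2)
    linarith
lemma hasDerivAt_uF (L η : ℝ) (hL : -1/2 < L) {t : ℝ} (ht : 0 < t) :
    HasDerivAt (fun s => s ^ (L+1) * coulombF L η s) (t ^ L * cG L η t) t := by
  have h1 := Real.hasDerivAt_rpow_const (x := t) (p := L+1) (Or.inl ht.ne')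
  have h3 := h1.mul (hasDerivAt_F L η hL t)
  refine h3.congr_deriv (Eq.symm ?_)
  have hpow : t ^ (L+1) = t ^ L * t := by
    rw [← Real.rpow_add_one ht.ne' L]
  have hpow2 : t ^ (L+1-1) = t ^ L := by
    rw [show L+1-1 = L by ring]
  rw [hpow2, hpow]
  unfold cG
  ring

lemma pos_case (L η : ℝ) (hL : -1/2 < L) {a b : ℝ} (ha0 : 0 < a) (hab : a < b)
    (hFa : coulombF L η a = 0) (hFb : coulombF L η b = 0)
    (hcons : ∀ x, a < x → x < b → coulombF L η x ≠ 0) :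
    ∃! c, c ∈ Set.Ioo a b ∧
      (L + 1) * coulombF L η c + c * deriv (coulombF L η) c = 0 := by
  have hder : ∀ c : ℝ, (L + 1) * coulombF L η c + c * deriv (coulombF L η) c = cG L η c := by
    intro c
    rw [deriv_F L η hL c]
    rfl
  have hFcont := continuous_F L η hL
  -- q is positive on (a,b)
  have hqpos : ∀ t, a < t → t < b → 0 < qq L η t := by
    intro t h1 h2
    by_contra h
    push_neg at h
    exact no_zero_in_nonosc L η hL ha0 h1.le h hFa
  -- sign of F on (a,b) is that of F at the midpoint
  set m : ℝ := (a+b)/2 with hm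
  have hm1 : a < m := by rw [hm]; linarith
  have hm2 : m < b := by rw [hm]; linarith
  have hFm : coulombF L η m ≠ 0 := hcons m hm1 hm2
  have hsame : ∀ t, a < t → t < b → (0 < coulombF L η t ↔ 0 < coulombF L η m) := by
    intro t h1 h2
    rcases le_total t m with h | h
    · exact sign_propagate hFcont h
        (fun u hu1 hu2 => hcons u (lt_of_lt_of_le h1 hu1) (lt_of_le_of_lt hu2 hm2))
    · exact (sign_propagate hFcont h
        (fun u hu1 hu2 => hcons u (lt_of_lt_of_le hm1 hu1) (lt_of_le_of_lt hu2 h2))).symm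
  -- existence via Rolle
  have existence : ∃ c ∈ Set.Ioo a b, c ^ L * cG L η c = 0 := by
    apply exists_hasDerivAt_eq_zero hab
    · intro t ht
      have htpos : 0 < t := lt_of_lt_of_le ha0 ht.1
      exact ((hasDerivAt_uF L η hL htpos).continuousAt).continuousWithinAt
    · rw [hFa, hFb, mul_zero, mul_zero]
    · intro t ht
      exact hasDerivAt_uF L η hL (lt_trans ha0 ht.1)
  obtain ⟨c, hcI, hc⟩ := existence
  have hcpos : 0 < c := lt_trans ha0 hcI.1
  have hGc : cG L η c = 0 := by
    rcases mul_eq_zero.1 hc with h | h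
    · exact absurd h (Real.rpow_pos_of_pos hcpos L).ne'
    · exact h
  -- uniqueness core
  have uniq : ∀ c₁ c₂ : ℝ, c₁ ∈ Set.Ioo a b → c₂ ∈ Set.Ioo a b →
      cG L η c₁ = 0 → cG L η c₂ = 0 → c₁ < c₂ → False := by
    intro c₁ c₂ h1 h2 hg1 hg2 hlt
    have hsub : ∀ t : ℝ, c₁ ≤ t → t ≤ c₂ → (a < t ∧ t < b) :=
      fun t ht1 ht2 => ⟨lt_of_lt_of_le h1.1 ht1, lt_of_le_of_lt ht2 h2.2⟩
    rcases lt_or_gt_of_ne hFm with hFmneg | hFmpos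
    · -- F < 0 on (a,b); use f = -G
      apply at_most_one_zero (f := fun t => -(cG L η t))
        (f' := fun t => -((L+2) * cDF L η t + t * cDDF L η t))
        (fun x => (hasDerivAt_G L η hL x).neg) hlt
        (by show -(cG L η c₁) = 0; rw [hg1, neg_zero]) (by show -(cG L η c₂) = 0; rw [hg2, neg_zero])
      intro t ht1 ht2 htz
      obtain ⟨hta, htb⟩ := hsub t ht1 ht2
      have htpos : 0 < t := lt_trans ha0 hta
      have hFt : coulombF L η t < 0 := by
        rcases lt_trichotomy (coulombF L η t) 0 with h | h | h
        · exact h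
        · exact absurd h (hcons t hta htb)
        · exact absurd ((hsame t hta htb).1 h) (fun hh => absurd hh (not_lt.2 hFmneg.le))
      have hq := hqpos t hta htb
      have hGt : cG L η t = 0 := by linarith [neg_eq_zero.1 htz]
      have key := G_deriv_key L η hL t
      rw [hGt] at key
      have hpos : 0 < t * ((L+2) * cDF L η t + t * cDDF L η t) := by
        rw [key]
        nlinarith [mul_pos hq (neg_pos.2 hFt)]
      nlinarith [hpos, htpos]
    · -- F > 0 on (a,b); use f = G
      apply at_most_one_zero (f := cG L η)
        (f' := fun t => (L+2) * cDF L η t + t * cDDF L η t)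
        (fun x => hasDerivAt_G L η hL x) hlt hg1 hg2
      intro t ht1 ht2 htz
      obtain ⟨hta, htb⟩ := hsub t ht1 ht2
      have htpos : 0 < t := lt_trans ha0 hta
      have hFt : 0 < coulombF L η t := (hsame t hta htb).2 hFmpos
      have hq := hqpos t hta htb
      have key := G_deriv_key L η hL t
      rw [htz] at key
      have hneg : t * ((L+2) * cDF L η t + t * cDDF L η t) < 0 := by
        rw [key]
        nlinarith [mul_pos hq hFt]
      nlinarith [hneg, htpos]
  refine ⟨c, ⟨hcI, by rw [hder c]; exact hGc⟩, ?_⟩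
  rintro y ⟨hyI, hy⟩
  rw [hder y] at hy
  rcases lt_trichotomy y c with h | h | h
  · exact absurd (uniq y c hyI hcI hy hGc h) (fun hh => hh)
  · exact h
  · exact absurd (uniq c y hcI hyI hGc hy h) (fun hh => hh)
lemma coulombA_neg (L η : ℝ) (n : ℕ) :
    coulombA L (-η) n = (-1)^n * coulombA L η n := by
  have H : ∀ n : ℕ, coulombA L (-η) n = (-1)^n * coulombA L η n ∧
      coulombA L (-η) (n+1) = (-1)^(n+1) * coulombA L η (n+1) := by
    intro n
    induction n with
    | zero =>
      constructor
      · show (1:ℝ) = (-1)^0 * (1:ℝ)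
        norm_num
      · show -η / (L + 1) = (-1)^1 * (η / (L + 1))
        rw [pow_one]
        ring
    | succ m ih =>
      refine ⟨ih.2, ?_⟩
      rw [coulombA_two L (-η) m, coulombA_two L η m, ih.1, ih.2]
      rw [pow_succ, pow_succ]
      ring
  exact (H n).1

lemma coulombF_neg (L η x : ℝ) : coulombF L (-η) (-x) = coulombF L η x := by
  unfold coulombF
  apply tsum_congr
  intro n
  rw [coulombA_neg, neg_pow x n]
  have h : ((-1:ℝ))^n * (-1:ℝ)^n = 1 := by rw [← mul_pow]; norm_num
  calc (-1:ℝ)^n * coulombA L η n * ((-1:ℝ)^n * x^n)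
      = ((-1:ℝ)^n * (-1:ℝ)^n) * (coulombA L η n * x^n) := by ring
    _ = coulombA L η n * x^n := by rw [h, one_mul]

end CoulombProof


/-- The zeros of `ρ ↦ F_L(η,ρ)` and of `ρ ↦ F_L'(η,ρ)` are interlacing: between any two
consecutive zeros of the Coulomb wave function of the same sign there is exactly one point
where `(L+1) 𝓕_L(η,·) + ρ ∂𝓕_L/∂ρ(η,·)` vanishes (for positive arguments this is
equivalent to the vanishing of `F_L'(η,·)`). -/
theorem coulomb_deriv_zeros_interlacing (L η : ℝ) (hL : -1/2 < L) (a b : ℝ)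
    (ha : a ∈ coulombZ L η) (hb : b ∈ coulombZ L η) (hab : a < b) (hsign : 0 < a * b)
    (hconsec : ∀ x ∈ coulombZ L η, x ∉ Set.Ioo a b) :
    ∃! c, c ∈ Set.Ioo a b ∧
      (L + 1) * coulombF L η c + c * deriv (coulombF L η) c = 0 := by
  obtain ⟨hane, hFa⟩ := ha
  obtain ⟨hbne, hFb⟩ := hb
  rcases mul_pos_iff.1 hsign with ⟨ha0, hb0⟩ | ⟨ha0, hb0⟩
  · -- both positive
    apply CoulombProof.pos_case L η hL ha0 hab hFa hFb
    intro x h1 h2 hFx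
    exact hconsec x ⟨(lt_trans ha0 h1).ne', hFx⟩ ⟨h1, h2⟩
  · -- both negative : transfer to (-b, -a) with parameter -η
    have hFb' : coulombF L (-η) (-b) = 0 := by rw [CoulombProof.coulombF_neg]; exact hFb
    have hFa' : coulombF L (-η) (-a) = 0 := by rw [CoulombProof.coulombF_neg]; exact hFa
    have hswap : ∀ x : ℝ, coulombF L (-η) x = coulombF L η (-x) := by
      intro x
      have := CoulombProof.coulombF_neg L η (-x)
      rwa [neg_neg] at this
    have hcons' : ∀ x, -b < x → x < -a → coulombF L (-η) x ≠ 0 := by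
      intro x h1 h2 hFx
      rw [hswap] at hFx
      have hxpos : 0 < x := lt_trans (neg_pos.2 hb0) h1
      exact hconsec (-x) ⟨(neg_lt_zero.2 hxpos).ne, hFx⟩ ⟨by linarith, by linarith⟩
    have h := CoulombProof.pos_case L (-η) hL (neg_pos.2 hb0) (by linarith) hFb' hFa' hcons' 
    -- condition equivalence under x ↦ -x
    have hcondequiv : ∀ y : ℝ,
        ((L+1) * coulombF L η y + y * deriv (coulombF L η) y = 0)
        ↔ ((L+1) * coulombF L (-η) (-y) + (-y) * deriv (coulombF L (-η)) (-y) = 0) := by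
      intro y
      have hFfun : coulombF L η = fun s => coulombF L (-η) (-s) := by
        funext s
        rw [CoulombProof.coulombF_neg]
      have hd1 := CoulombProof.hasDerivAt_F L (-η) hL (-y)
      have hd2 : HasDerivAt (coulombF L η) (-(CoulombProof.cDF L (-η) (-y))) y := by
        rw [hFfun]
        have h3 := hd1.comp y (hasDerivAt_neg y)
        exact h3.congr_deriv (by ring)
      rw [hd2.deriv, hd1.deriv, CoulombProof.coulombF_neg]
      constructor <;> intro hh <;> linarith
    obtain ⟨c', ⟨hc'I, hc'cond⟩, hc'uniq⟩ := h
    refine ⟨-c', ⟨⟨by linarith [hc'I.2], by linarith [hc'I.1]⟩, ?_⟩, ?_⟩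
    · rw [hcondequiv (-c'), neg_neg]
      exact hc'cond
    · rintro y ⟨hyI, hy⟩
      have hcnd := (hcondequiv y).1 hy
      have huniq := hc'uniq (-y) ⟨⟨by linarith [hyI.2], by linarith [hyI.1]⟩, hcnd⟩
      linarith [huniq]
end

section
/- Let L > −1 and η ∈ ℝ. If a, b ∈ Z_{L,η} with a < b and no element of Z_{L,η} lies in the open interval (a,b), then there exists exactly one c ∈ (a,b) with ∂𝓕_L/∂ρ(η,c) = 0 (for c > 0 this condition is equivalent to c·F_L'(η,c) − (L+1)·F_L(η,c) = 0, since ρF_L'(η,ρ) − (L+1)F_L(η,ρ) = C_L(η)ρ^{L+2}·∂𝓕_L/∂ρ(η,ρ)). In other words, the zeros of ρ ↦ F_L(η,ρ) and of ρ ↦ ρF_L'(η,ρ) − (L+1)F_L(η,ρ) are interlacing. -/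
open Real

namespace CoulombAux

open Set

noncomputable def dcoef (a : ℕ → ℝ) : ℕ → ℝ := fun n => ((n : ℝ) + 1) * a (n + 1)

noncomputable def Fser (a : ℕ → ℝ) (x : ℝ) : ℝ := ∑' n : ℕ, a n * x ^ n

def decay (a : ℕ → ℝ) : Prop := ∃ C : ℝ, 1 ≤ C ∧ ∀ n : ℕ, |a n| ≤ C ^ (n + 1) / n.factorial

lemma summable_aux (C x : ℝ) : Summable (fun n : ℕ => C ^ (n+1) / n.factorial * |x| ^ n) := by
  have h := (Real.summable_pow_div_factorial (C * |x|)).mul_left C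
  refine h.congr fun n => ?_
  rw [mul_pow]
  field_simp
  ring

lemma decay.summable_abs {a : ℕ → ℝ} (ha : decay a) (x : ℝ) :
    Summable (fun n : ℕ => |a n * x ^ n|) := by
  obtain ⟨C, hC1, hC⟩ := ha
  refine Summable.of_nonneg_of_le (fun n => abs_nonneg _) (fun n => ?_) (summable_aux C x)
  rw [abs_mul, abs_pow]
  exact mul_le_mul_of_nonneg_right (hC n) (by positivity)

lemma decay.summable {a : ℕ → ℝ} (ha : decay a) (x : ℝ) :
    Summable (fun n : ℕ => a n * x ^ n) :=
  (ha.summable_abs x).of_abs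

lemma decay_dcoef {a : ℕ → ℝ} (ha : decay a) : decay (dcoef a) := by
  obtain ⟨C, hC1, hC⟩ := ha
  refine ⟨C ^ 2, one_le_pow₀ hC1, fun n => ?_⟩
  have h := hC (n + 1)
  have h1 : |dcoef a n| = ((n : ℝ) + 1) * |a (n + 1)| := by
    rw [show dcoef a n = ((n:ℝ)+1) * a (n+1) from rfl, abs_mul, abs_of_nonneg (by positivity)]
  rw [h1]
  have hfac : ((n + 1).factorial : ℝ) = ((n : ℝ) + 1) * n.factorial := by
    rw [Nat.factorial_succ]; push_cast; ring
  have h2 : ((n : ℝ) + 1) * |a (n + 1)| ≤ C ^ (n + 2) / n.factorial := by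
    rw [hfac] at h
    have hn1 : (0 : ℝ) < (n : ℝ) + 1 := by positivity
    have hfp : (0 : ℝ) < (n.factorial : ℝ) := by positivity
    calc ((n : ℝ) + 1) * |a (n + 1)| ≤ ((n : ℝ) + 1) * (C ^ (n + 2) / (((n : ℝ) + 1) * n.factorial)) :=
          mul_le_mul_of_nonneg_left h (by positivity)
      _ = C ^ (n + 2) / n.factorial := by field_simp
  refine h2.trans ?_
  have : C ^ (n + 2) ≤ (C ^ 2) ^ (n + 1) := by
    rw [← pow_mul]
    exact pow_le_pow_right₀ hC1 (by omega)
  exact div_le_div_of_nonneg_right this (by positivity) |>.trans_eq rfl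

lemma Fser_zero (a : ℕ → ℝ) : Fser a 0 = a 0 := by
  rw [Fser, tsum_eq_single 0 (fun n hn => by simp [zero_pow hn])]
  simp

lemma summable_deriv_bound {a : ℕ → ℝ} (ha : decay a) (R : ℝ) (hR : 0 ≤ R) :
    Summable (fun n : ℕ => |a n| * ((n : ℝ) * R ^ (n - 1))) := by
  rw [← summable_nat_add_iff 1]
  have h := ((decay_dcoef ha).summable_abs R)
  refine h.congr fun n => ?_
  simp only [dcoef, Nat.add_sub_cancel, abs_mul, abs_pow]
  rw [abs_of_nonneg (show (0:ℝ) ≤ (n:ℝ)+1 by positivity), abs_of_nonneg hR]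
  push_cast
  ring

set_option maxHeartbeats 1000000 in
lemma decay.hasDerivAt {a : ℕ → ℝ} (ha : decay a) (x : ℝ) :
    HasDerivAt (Fser a) (Fser (dcoef a) x) x := by
  set R : ℝ := |x| + 1 with hR
  have hR0 : 0 ≤ R := by positivity
  have hxR : x ∈ Ioo (-R) R := by
    constructor <;> [nlinarith [abs_nonneg x, neg_abs_le x]; nlinarith [le_abs_self x]]
  have hsum : Summable (fun n : ℕ => |a n| * ((n : ℝ) * R ^ (n - 1))) :=
    summable_deriv_bound ha R hR0
  have key : HasDerivAt (fun y => ∑' n : ℕ, a n * y ^ n)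
      (∑' n : ℕ, a n * ((n : ℝ) * x ^ (n - 1))) x := by
    refine hasDerivAt_tsum_of_isPreconnected (g := fun (n:ℕ) (y:ℝ) => a n * y ^ n)
      (g' := fun (n:ℕ) (y:ℝ) => a n * ((n : ℝ) * y ^ (n - 1))) hsum isOpen_Ioo
      ((convex_Ioo _ _).isPreconnected) (fun n y _ => ?_) (fun n y hy => ?_) hxR
      (ha.summable x) hxR
    · exact (hasDerivAt_pow n y).const_mul (a n)
    · have hy' : |y| ≤ R := by
        rw [abs_le]; exact ⟨hy.1.le, hy.2.le⟩
      rw [Real.norm_eq_abs, abs_mul, abs_mul, abs_pow]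
      refine mul_le_mul_of_nonneg_left ?_ (abs_nonneg _)
      rw [abs_of_nonneg (show (0:ℝ) ≤ (n:ℝ) from n.cast_nonneg)]
      exact mul_le_mul_of_nonneg_left (pow_le_pow_left₀ (abs_nonneg y) hy' _) n.cast_nonneg
  have hsx : Summable (fun n : ℕ => a n * ((n : ℝ) * x ^ (n - 1))) := by
    refine (hsum.of_nonneg_of_le (fun n => abs_nonneg _) (fun n => ?_)).of_abs
    rw [abs_mul, abs_mul, abs_pow]
    refine mul_le_mul_of_nonneg_left ?_ (abs_nonneg _)
    rw [abs_of_nonneg (show (0:ℝ) ≤ (n:ℝ) from n.cast_nonneg)]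
    refine mul_le_mul_of_nonneg_left (pow_le_pow_left₀ (abs_nonneg x) ?_ _) n.cast_nonneg
    nlinarith [abs_nonneg x]
  have heq : (∑' n : ℕ, a n * ((n : ℝ) * x ^ (n - 1))) = Fser (dcoef a) x := by
    rw [Summable.tsum_eq_zero_add hsx]
    simp only [Nat.cast_zero, zero_mul, mul_zero, zero_add]
    rw [Fser]
    exact tsum_congr fun n => by simp only [dcoef, Nat.add_sub_cancel]; push_cast; ring
  rw [← heq]
  exact key

lemma decay.continuous {a : ℕ → ℝ} (ha : decay a) : Continuous (Fser a) :=
  continuous_iff_continuousAt.2 fun x => (ha.hasDerivAt x).continuousAt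

set_option maxHeartbeats 1600000 in
lemma coulombA_decay (L η : ℝ) (hL : -1 < L) : decay (coulombA L η) := by
  have hL1 : (0:ℝ) < L + 1 := by linarith
  set C : ℝ := 3 + |η| / (L + 1) + 4 * |η| with hCdef
  have he : (0:ℝ) ≤ |η| := abs_nonneg η
  have he2 : (0:ℝ) ≤ |η| / (L + 1) := by positivity
  have hC1 : 1 ≤ C := by rw [hCdef]; linarith
  have hC2 : 2 * |η| + 1 ≤ C := by rw [hCdef]; linarith
  have hCa1 : |η| / (L + 1) ≤ C := by rw [hCdef]; linarith
  refine ⟨C, hC1, ?_⟩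
  have key : ∀ n : ℕ, |coulombA L η n| ≤ C ^ (n+1) / n.factorial ∧
      |coulombA L η (n+1)| ≤ C ^ (n+2) / (n+1).factorial := by
    intro n
    induction n with
    | zero =>
      constructor
      · rw [show coulombA L η 0 = 1 from rfl]
        norm_num
        linarith
      · rw [show coulombA L η (0+1) = η / (L+1) from rfl]
        rw [abs_div, abs_of_pos hL1]
        norm_num
        nlinarith
    | succ n ih =>
      refine ⟨ih.2, ?_⟩
      have hrec : coulombA L η (n+2) = (2 * η * coulombA L η (n + 1) - coulombA L η n) /
          (((n : ℝ) + 2) * (((n : ℝ) + 2) + 2 * L + 1)) := rfl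
      set d : ℝ := ((n : ℝ) + 2) * (((n : ℝ) + 2) + 2 * L + 1) with hd
      have hdlb : ((n:ℝ)+2) * ((n:ℝ)+1) ≤ d := by
        rw [hd]
        have : (0:ℝ) ≤ (n:ℝ) := n.cast_nonneg
        nlinarith
      have hd0 : 0 < d := lt_of_lt_of_le (by positivity) hdlb
      have F0 : (0:ℝ) < (n.factorial : ℝ) := by positivity
      have F1 : ((n+1).factorial : ℝ) = ((n:ℝ)+1) * n.factorial := by
        rw [Nat.factorial_succ]; push_cast; ring
      have F2 : ((n+2).factorial : ℝ) = ((n:ℝ)+2) * ((n:ℝ)+1) * n.factorial := by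
        rw [Nat.factorial_succ, Nat.factorial_succ]; push_cast; ring
      have hnum : |2 * η * coulombA L η (n + 1) - coulombA L η n| ≤
          2 * |η| * (C ^ (n+2) / (n+1).factorial) + C ^ (n+1) / n.factorial := by
        calc |2 * η * coulombA L η (n + 1) - coulombA L η n|
            ≤ |2 * η * coulombA L η (n + 1)| + |coulombA L η n| := abs_sub _ _
          _ = 2 * |η| * |coulombA L η (n + 1)| + |coulombA L η n| := by
              rw [abs_mul, abs_mul]; norm_num
          _ ≤ 2 * |η| * (C ^ (n+2) / (n+1).factorial) + C ^ (n+1) / n.factorial := by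
              have h2e : (0:ℝ) ≤ 2 * |η| := by positivity
              exact add_le_add (mul_le_mul_of_nonneg_left ih.2 h2e) ih.1
      show |coulombA L η (n+2)| ≤ C ^ (n+3) / (n+2).factorial
      rw [hrec, abs_div, abs_of_pos hd0]
      rw [div_le_div_iff₀ hd0 (by positivity : (0:ℝ) < ((n+2).factorial : ℝ))]
      have hpow : C ^ (n+1) ≤ C ^ (n+2) := pow_le_pow_right₀ hC1 (by omega)
      have hCp : (0:ℝ) < C := by linarith
      have hnn : (0:ℝ) ≤ (n:ℝ) := n.cast_nonneg
      have hq : (0:ℝ) < C ^ (n+1) := by positivity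
      have hp : (0:ℝ) < C ^ (n+2) := by positivity
      calc |2 * η * coulombA L η (n + 1) - coulombA L η n| * ((n+2).factorial : ℝ)
          ≤ (2 * |η| * (C ^ (n+2) / (n+1).factorial) + C ^ (n+1) / n.factorial) *
              ((n+2).factorial : ℝ) := by
            exact mul_le_mul_of_nonneg_right hnum (by positivity)
        _ = 2 * |η| * C ^ (n+2) * ((n:ℝ)+2) + C ^ (n+1) * (((n:ℝ)+2) * ((n:ℝ)+1)) := by
            rw [F2, F1]; field_simp
        _ ≤ (2*|η|+1) * C ^ (n+2) * (((n:ℝ)+2) * ((n:ℝ)+1)) := by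
            have h1 : 2 * |η| * C ^ (n+2) * ((n:ℝ)+2) ≤
                2 * |η| * C ^ (n+2) * (((n:ℝ)+2) * ((n:ℝ)+1)) := by
              refine mul_le_mul_of_nonneg_left ?_ (by positivity)
              nlinarith
            have h2 : C ^ (n+1) * (((n:ℝ)+2) * ((n:ℝ)+1)) ≤
                C ^ (n+2) * (((n:ℝ)+2) * ((n:ℝ)+1)) :=
              mul_le_mul_of_nonneg_right hpow (by positivity)
            nlinarith [h1, h2]
        _ ≤ C * C ^ (n+2) * (((n:ℝ)+2) * ((n:ℝ)+1)) := by
            nlinarith [mul_le_mul_of_nonneg_right (mul_le_mul_of_nonneg_right hC2 hp.le)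
              (show (0:ℝ) ≤ ((n:ℝ)+2)*((n:ℝ)+1) by positivity)]
        _ = C ^ (n+3) * (((n:ℝ)+2) * ((n:ℝ)+1)) := by ring
        _ ≤ C ^ (n+3) * d := mul_le_mul_of_nonneg_left hdlb (by positivity)
  exact fun n => (key n).1

lemma coulomb_ode (L η : ℝ) (hL : -1 < L) (x : ℝ) :
    x * Fser (dcoef (dcoef (coulombA L η))) x + (2*L+2) * Fser (dcoef (coulombA L η)) x
      + (x - 2*η) * Fser (coulombA L η) x = 0 := by
  have hL1 : (0:ℝ) < L + 1 := by linarith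
  set A := coulombA L η with hA
  set B := dcoef A with hB
  set C2 := dcoef B with hC2
  have dA : decay A := coulombA_decay L η hL
  have dB : decay B := decay_dcoef dA
  have dC2 : decay C2 := decay_dcoef dB
  have sA := dA.summable x
  have sB := dB.summable x
  have sC2 := dC2.summable x
  have sA1 : Summable (fun n : ℕ => A n * x ^ (n+1)) := by
    refine (sA.mul_left x).congr fun n => ?_; ring
  have sC21 : Summable (fun n : ℕ => C2 n * x ^ (n+1)) := by
    refine (sC2.mul_left x).congr fun n => ?_; ring
  have h1 : x * Fser C2 x + x * Fser A x = ∑' n : ℕ, (C2 n + A n) * x ^ (n+1) := by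
    have e1 : x * Fser C2 x = ∑' n : ℕ, C2 n * x ^ (n+1) := by
      rw [Fser, ← tsum_mul_left]; exact tsum_congr fun n => by ring
    have e2 : x * Fser A x = ∑' n : ℕ, A n * x ^ (n+1) := by
      rw [Fser, ← tsum_mul_left]; exact tsum_congr fun n => by ring
    rw [e1, e2, ← Summable.tsum_add sC21 sA1]
    exact tsum_congr fun n => by ring
  have h2 : 2*η * Fser A x - (2*L+2) * Fser B x
      = ∑' n : ℕ, (2*η*A n - (2*L+2)*B n) * x ^ n := by
    rw [Fser, Fser, ← tsum_mul_left, ← tsum_mul_left,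
      ← Summable.tsum_sub (sA.mul_left (2*η)) (sB.mul_left (2*L+2))]
    exact tsum_congr fun n => by ring
  have hr0 : 2*η*A 0 - (2*L+2)*B 0 = 0 := by
    have hA0 : A 0 = 1 := rfl
    have hB0 : B 0 = η/(L+1) := by
      simp [hA, hB, dcoef, show coulombA L η 1 = η/(L+1) from rfl]
    rw [hA0, hB0]
    field_simp
    ring
  have hrs : ∀ n : ℕ, 2*η*A (n+1) - (2*L+2)*B (n+1) = C2 n + A n := by
    intro n
    have hd0 : (((n:ℝ)+2) * (((n:ℝ)+2)+2*L+1)) ≠ 0 := by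
      have hnn : (0:ℝ) ≤ (n:ℝ) := n.cast_nonneg
      have : (0:ℝ) < ((n:ℝ)+2) * (((n:ℝ)+2)+2*L+1) := by nlinarith
      exact this.ne'
    have hA2 : (((n:ℝ)+2) * (((n:ℝ)+2)+2*L+1)) * A (n+2) = 2*η*A (n+1) - A n := by
      have hk : ((n:ℝ)+2+2*L+1) ≠ 0 := right_ne_zero_of_mul hd0
      rw [hA, show coulombA L η (n+2) = (2 * η * coulombA L η (n + 1) - coulombA L η n) /
          (((n : ℝ) + 2) * (((n : ℝ) + 2) + 2 * L + 1)) from rfl]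
      field_simp
    have hBe : B (n+1) = (((n:ℕ):ℝ) + 1 + 1) * A (n+2) := by
      show (((n+1:ℕ):ℝ) + 1) * A (n+1+1) = _
      push_cast; ring_nf
    have hC2e : C2 n = ((n:ℝ) + 1) * B (n+1) := rfl
    rw [hC2e, hBe]
    push_cast
    nlinarith [hA2]
  have h3 : (∑' n : ℕ, (2*η*A n - (2*L+2)*B n) * x ^ n)
      = ∑' n : ℕ, (C2 n + A n) * x ^ (n+1) := by
    have hs : Summable (fun n : ℕ => (2*η*A n - (2*L+2)*B n) * x ^ n) := by
      refine (((sA.mul_left (2*η))).sub (sB.mul_left (2*L+2))).congr fun n => ?_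
      ring
    rw [Summable.tsum_eq_zero_add hs, hr0]
    simp only [pow_zero, zero_mul, zero_add]
    exact tsum_congr fun n => by rw [hrs n]
  linear_combination h1 - h2 - h3

lemma coulombA_neg (L η : ℝ) (n : ℕ) :
    coulombA L (-η) n = (-1:ℝ)^n * coulombA L η n := by
  have key : ∀ m : ℕ, coulombA L (-η) m = (-1:ℝ)^m * coulombA L η m ∧
      coulombA L (-η) (m+1) = (-1:ℝ)^(m+1) * coulombA L η (m+1) := by
    intro m
    induction m with
    | zero =>
      constructor
      · show (1:ℝ) = (-1:ℝ)^0 * 1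
        norm_num
      · show -η/(L+1) = (-1:ℝ)^(0+1) * (η/(L+1))
        rw [neg_div]; norm_num
    | succ m ih =>
      refine ⟨ih.2, ?_⟩
      show coulombA L (-η) (m+2) = (-1:ℝ)^(m+2) * coulombA L η (m+2)
      rw [show coulombA L (-η) (m+2) = (2 * (-η) * coulombA L (-η) (m + 1) - coulombA L (-η) m) /
          (((m : ℝ) + 2) * (((m : ℝ) + 2) + 2 * L + 1)) from rfl,
        show coulombA L η (m+2) = (2 * η * coulombA L η (m + 1) - coulombA L η m) /
          (((m : ℝ) + 2) * (((m : ℝ) + 2) + 2 * L + 1)) from rfl,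
        ih.1, ih.2, pow_succ, pow_succ]
      ring
  exact (key n).1

lemma Fser_neg (L η : ℝ) (x : ℝ) :
    Fser (coulombA L (-η)) x = Fser (coulombA L η) (-x) := by
  refine tsum_congr fun n => ?_
  rw [coulombA_neg, neg_pow]
  ring

lemma gneg (L η : ℝ) (hL : -1 < L) (x : ℝ) :
    Fser (dcoef (coulombA L (-η))) x = - Fser (dcoef (coulombA L η)) (-x) := by
  have h1 := (coulombA_decay L (-η) hL).hasDerivAt x
  have h2 : HasDerivAt (fun y : ℝ => Fser (coulombA L η) (-y))
      (Fser (dcoef (coulombA L η)) (-x) * (-1)) x :=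
    ((coulombA_decay L η hL).hasDerivAt (-x)).comp x (hasDerivAt_neg x)
  have heq : Fser (coulombA L (-η)) = fun y => Fser (coulombA L η) (-y) :=
    funext fun y => Fser_neg L η y
  rw [heq] at h1
  have := h1.unique h2
  linarith

noncomputable def hfun (L η : ℝ) (x : ℝ) : ℝ :=
  x ^ (2*L+2) * Fser (dcoef (coulombA L η)) x

lemma hfun_hasDerivAt (L η : ℝ) (hL : -1 < L) {x : ℝ} (hx : 0 < x) :
    HasDerivAt (hfun L η) (x ^ (2*L+1) * ((2*η - x) * Fser (coulombA L η) x)) x := by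
  have dB : decay (dcoef (coulombA L η)) := decay_dcoef (coulombA_decay L η hL)
  have h1 : HasDerivAt (fun y : ℝ => y ^ (2*L+2)) ((2*L+2) * x ^ (2*L+1)) x := by
    have h := Real.hasDerivAt_rpow_const (x := x) (p := 2*L+2) (Or.inl hx.ne')
    rw [show (2*L+2-1) = 2*L+1 by ring] at h
    exact h
  have h2 := dB.hasDerivAt x
  have h3 := h1.mul h2
  have hsplit : x ^ (2*L+2) = x ^ (2*L+1) * x := by
    rw [show (2*L+2) = (2*L+1)+1 by ring, Real.rpow_add hx, Real.rpow_one]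
  have ode := coulomb_ode L η hL x
  have h4 : HasDerivAt (hfun L η) ((2*L+2) * x ^ (2*L+1) * Fser (dcoef (coulombA L η)) x
      + x ^ (2*L+2) * Fser (dcoef (dcoef (coulombA L η))) x) x := h3
  refine h4.congr_deriv (Eq.symm ?_)
  rw [hsplit]
  linear_combination (-(x ^ (2*L+1))) * ode

lemma hfun_tendsto (L η : ℝ) (hL : -1 < L) :
    Filter.Tendsto (hfun L η) (nhdsWithin 0 (Ioi 0)) (nhds 0) := by
  have hc : ContinuousAt (fun x : ℝ => x ^ (2*L+2)) 0 :=
    Real.continuousAt_rpow_const 0 _ (Or.inr (by linarith))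
  have hg : ContinuousAt (Fser (dcoef (coulombA L η))) 0 :=
    ((decay_dcoef (coulombA_decay L η hL)).hasDerivAt 0).continuousAt
  have h : Filter.Tendsto (hfun L η) (nhds 0)
      (nhds ((0:ℝ) ^ (2*L+2) * Fser (dcoef (coulombA L η)) 0)) := (hc.mul hg).tendsto
  rw [show ((0:ℝ) ^ (2*L+2) * Fser (dcoef (coulombA L η)) 0) = 0 by
    rw [Real.zero_rpow (by linarith : 2*L+2 ≠ 0), zero_mul]] at h
  exact h.mono_left nhdsWithin_le_nhds

lemma step1 (L η : ℝ) (hL : -1 < L) {c₁ c₂ : ℝ} (h0 : 0 < c₁) (h12 : c₁ < c₂)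
    (hf : ∀ x ∈ Ioo c₁ c₂, Fser (coulombA L η) x ≠ 0)
    (h1 : Fser (dcoef (coulombA L η)) c₁ = 0) (h2 : Fser (dcoef (coulombA L η)) c₂ = 0) :
    2*η ∈ Ioo c₁ c₂ := by
  have hcont : ContinuousOn (hfun L η) (Icc c₁ c₂) := fun x hx =>
    ((hfun_hasDerivAt L η hL (lt_of_lt_of_le h0 hx.1)).continuousAt).continuousWithinAt
  have hval : hfun L η c₁ = hfun L η c₂ := by simp [hfun, h1, h2]
  obtain ⟨d, hd, hd0⟩ := exists_hasDerivAt_eq_zero h12 hcont hval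
    (fun x hx => hfun_hasDerivAt L η hL (h0.trans hx.1))
  have hdpos : 0 < d := h0.trans hd.1
  have hne : d ^ (2*L+1) ≠ 0 := (Real.rpow_pos_of_pos hdpos _).ne'
  have hfd : Fser (coulombA L η) d ≠ 0 := hf d hd
  have hd2 : d = 2*η := by
    rcases mul_eq_zero.1 hd0 with h | h
    · exact absurd h hne
    rcases mul_eq_zero.1 h with h | h
    · linarith
    · exact absurd h hfd
  rw [← hd2]
  exact hd

lemma step2 (L η : ℝ) (hL : -1 < L) {l c₁ ε : ℝ} (hl : 0 ≤ l) (hlt : l < c₁) (h2η : c₁ < 2*η)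
    (hf : ∀ x ∈ Ioc l c₁, 0 < ε * Fser (coulombA L η) x)
    (h1 : Fser (dcoef (coulombA L η)) c₁ = 0) :
    ∀ x ∈ Ioo l c₁, ε * Fser (dcoef (coulombA L η)) x < 0 := by
  set H : ℝ → ℝ := fun x => ε * hfun L η x with hH
  have hmono : StrictMonoOn H (Ioc l c₁) := by
    refine strictMonoOn_of_deriv_pos (convex_Ioc l c₁) ?_ ?_
    · intro x hx
      exact (((hfun_hasDerivAt L η hL (lt_of_le_of_lt hl hx.1)).const_mul
        ε).continuousAt).continuousWithinAt
    · intro x hx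
      rw [interior_Ioc] at hx
      have hx0 : 0 < x := lt_of_le_of_lt hl hx.1
      have hder := (hfun_hasDerivAt L η hL hx0).const_mul ε
      rw [hder.deriv]
      have h1' : 0 < ε * Fser (coulombA L η) x := hf x ⟨hx.1, hx.2.le⟩
      have heq : ε * (x ^ (2*L+1) * ((2*η - x) * Fser (coulombA L η) x)) =
          x ^ (2*L+1) * ((2*η - x) * (ε * Fser (coulombA L η) x)) := by ring
      rw [heq]
      have hp := Real.rpow_pos_of_pos hx0 (2*L+1)
      have h2 : 0 < 2*η - x := by linarith [hx.2]
      exact mul_pos hp (mul_pos h2 h1')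
  intro x hx
  have hlt' : H x < H c₁ := hmono ⟨hx.1, hx.2.le⟩ ⟨hlt, le_refl c₁⟩ hx.2
  have hHc : H c₁ = 0 := by simp [hH, hfun, h1]
  have hx0 : 0 < x := lt_of_le_of_lt hl hx.1
  have hp : 0 < x ^ (2*L+2) := Real.rpow_pos_of_pos hx0 _
  have hHx : ε * (x ^ (2*L+2) * Fser (dcoef (coulombA L η)) x) < 0 := by
    rw [hHc] at hlt'
    exact hlt'
  by_contra hcon
  push_neg at hcon
  nlinarith [mul_nonneg hp.le hcon]

lemma no_two_pos (L η : ℝ) (hL : -1 < L) {a c₁ c₂ ε : ℝ} (ha : 0 < a) (h1 : a < c₁)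
    (h12 : c₁ < c₂) (hfa : Fser (coulombA L η) a = 0)
    (hf : ∀ x ∈ Ioc a c₂, 0 < ε * Fser (coulombA L η) x)
    (hg1 : Fser (dcoef (coulombA L η)) c₁ = 0)
    (hg2 : Fser (dcoef (coulombA L η)) c₂ = 0) : False := by
  have hfne : ∀ x ∈ Ioo c₁ c₂, Fser (coulombA L η) x ≠ 0 := by
    intro x hx hx0
    have := hf x ⟨h1.trans hx.1, hx.2.le⟩
    rw [hx0, mul_zero] at this
    exact lt_irrefl _ this
  have h2η := step1 L η hL (ha.trans h1) h12 hfne hg1 hg2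
  have hneg := step2 L η hL ha.le h1 h2η.1 (fun x hx => hf x ⟨hx.1, hx.2.trans h12.le⟩) hg1
  set φ : ℝ → ℝ := fun x => ε * Fser (coulombA L η) x with hφ
  have dA := coulombA_decay L η hL
  have hanti : StrictAntiOn φ (Icc a c₁) := by
    refine strictAntiOn_of_deriv_neg (convex_Icc a c₁) ?_ ?_
    · exact (continuous_const.mul dA.continuous).continuousOn
    · intro x hx
      rw [interior_Icc] at hx
      rw [((dA.hasDerivAt x).const_mul ε).deriv]
      exact hneg x hx
  have hm : (a + c₁)/2 ∈ Ioo a c₁ := ⟨by linarith, by linarith⟩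
  have h3 : φ ((a+c₁)/2) < φ a := hanti ⟨le_refl a, h1.le⟩ ⟨hm.1.le, hm.2.le⟩ hm.1
  have h4 : φ a = 0 := by simp [hφ, hfa]
  have h5 := hf ((a+c₁)/2) ⟨hm.1, by nlinarith⟩
  rw [h4] at h3
  exact absurd h5 (not_lt.2 h3.le)

lemma g_at_zero (L η : ℝ) : Fser (dcoef (coulombA L η)) 0 = η / (L+1) := by
  rw [Fser_zero]
  simp [dcoef, show coulombA L η 1 = η/(L+1) from rfl]

lemma no_two_mixed (L η : ℝ) (hL : -1 < L) {c₁ c₂ : ℝ} (h0 : 0 < c₁) (h12 : c₁ < c₂)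
    (hf : ∀ x ∈ Ioc 0 c₂, 0 < Fser (coulombA L η) x)
    (hg1 : Fser (dcoef (coulombA L η)) c₁ = 0)
    (hg2 : Fser (dcoef (coulombA L η)) c₂ = 0) : False := by
  have hL1 : (0:ℝ) < L + 1 := by linarith
  have hfne : ∀ x ∈ Ioo c₁ c₂, Fser (coulombA L η) x ≠ 0 := by
    intro x hx hx0
    have := hf x ⟨h0.trans hx.1, hx.2.le⟩
    rw [hx0] at this
    exact lt_irrefl _ this
  have h2η := step1 L η hL h0 h12 hfne hg1 hg2
  have hf1 : ∀ x ∈ Ioc (0:ℝ) c₁, 0 < (1:ℝ) * Fser (coulombA L η) x := by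
    intro x hx
    rw [one_mul]
    exact hf x ⟨hx.1, hx.2.trans h12.le⟩
  have hneg := step2 L η hL (le_refl (0:ℝ)) h0 h2η.1 hf1 hg1
  have hgc : ContinuousAt (Fser (dcoef (coulombA L η))) 0 :=
    ((decay_dcoef (coulombA_decay L η hL)).hasDerivAt 0).continuousAt
  have hg0 : Fser (dcoef (coulombA L η)) 0 ≤ 0 := by
    have ht : Filter.Tendsto (Fser (dcoef (coulombA L η))) (nhdsWithin 0 (Ioi 0))
        (nhds (Fser (dcoef (coulombA L η)) 0)) := hgc.tendsto.mono_left nhdsWithin_le_nhds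
    refine le_of_tendsto ht ?_
    filter_upwards [Ioo_mem_nhdsGT_of_mem (show (0:ℝ) ∈ Ico (0:ℝ) c₁ from ⟨le_refl _, h0⟩)]
      with x hx
    have := hneg x hx
    linarith
  rw [g_at_zero] at hg0
  have hη : η ≤ 0 := by
    by_contra hcon
    push_neg at hcon
    have : 0 < η / (L+1) := by positivity
    linarith
  have := h2η.1
  linarith

lemma crit_pos_eta (L η : ℝ) (hL : -1 < L) {c : ℝ} (hc : 0 < c)
    (hf : ∀ x ∈ Ioc 0 c, 0 < Fser (coulombA L η) x)
    (hg : Fser (dcoef (coulombA L η)) c = 0) : 0 < η := by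
  by_contra hcon
  push_neg at hcon
  have hanti : StrictAntiOn (hfun L η) (Ioc 0 c) := by
    refine strictAntiOn_of_deriv_neg (convex_Ioc 0 c) ?_ ?_
    · intro x hx
      exact ((hfun_hasDerivAt L η hL hx.1).continuousAt).continuousWithinAt
    · intro x hx
      rw [interior_Ioc] at hx
      rw [(hfun_hasDerivAt L η hL hx.1).deriv]
      have h2 : 2*η - x < 0 := by linarith [hx.1]
      have hF := hf x ⟨hx.1, hx.2.le⟩
      have hp := Real.rpow_pos_of_pos hx.1 (2*L+1)
      exact mul_neg_of_pos_of_neg hp (mul_neg_of_neg_of_pos h2 hF)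
  have hhc : hfun L η c = 0 := by simp [hfun, hg]
  have hc2 : c/2 ∈ Ioc (0:ℝ) c := ⟨by positivity, by linarith⟩
  have hpos : 0 < hfun L η (c/2) := by
    have := hanti hc2 ⟨hc, le_refl c⟩ (by linarith)
    rw [hhc] at this
    exact this
  have htend := hfun_tendsto L η hL
  have hev : ∀ᶠ x in nhdsWithin 0 (Ioi 0), hfun L η (c/2) ≤ hfun L η x := by
    filter_upwards [Ioo_mem_nhdsGT_of_mem
      (show (0:ℝ) ∈ Ico (0:ℝ) (c/2) from ⟨le_refl _, by positivity⟩)] with x hx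
    exact (hanti ⟨hx.1, by linarith [hx.2, hc2.2]⟩ hc2 hx.2).le
  have := ge_of_tendsto htend hev
  linarith

lemma eta_zero_of_g_zero (L η : ℝ) (hL : -1 < L)
    (h : Fser (dcoef (coulombA L η)) 0 = 0) : η = 0 := by
  rw [g_at_zero] at h
  have hL1 : (0:ℝ) < L + 1 := by linarith
  rcases div_eq_zero_iff.1 h with h' | h'
  · exact h'
  · exact absurd h' hL1.ne'

lemma crit_neg_eta (L η : ℝ) (hL : -1 < L) {c : ℝ} (hc : c < 0)
    (hf : ∀ x ∈ Ico c (0:ℝ), 0 < Fser (coulombA L η) x)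
    (hg : Fser (dcoef (coulombA L η)) c = 0) : η < 0 := by
  have h := crit_pos_eta L (-η) hL (show (0:ℝ) < -c by linarith)
    (fun x hx => by
      rw [Fser_neg]
      exact hf (-x) ⟨by linarith [hx.2], by linarith [hx.1]⟩)
    (by rw [gneg L η hL, neg_neg, hg, neg_zero])
  linarith

lemma no_two (L η : ℝ) (hL : -1 < L) {a b c c' ε : ℝ} (hab : a < b)
    (ha0 : a ≠ 0) (hb0 : b ≠ 0)
    (hfa : Fser (coulombA L η) a = 0) (hfb : Fser (coulombA L η) b = 0)
    (hε : ε = 1 ∨ ε = -1)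
    (hsign : ∀ x ∈ Ioo a b, 0 < ε * Fser (coulombA L η) x)
    (hc : c ∈ Ioo a b) (hc' : c' ∈ Ioo a b) (hlt : c < c')
    (hg : Fser (dcoef (coulombA L η)) c = 0)
    (hg' : Fser (dcoef (coulombA L η)) c' = 0) : False := by
  rcases ha0.lt_or_gt with haneg | hapos
  · rcases hb0.lt_or_gt with hbneg | hbpos
    · -- b < 0 : mirror of the pure positive case
      refine no_two_pos L (-η) hL (ε := ε) (show (0:ℝ) < -b by linarith)
        (show -b < -c' by linarith [hc'.2]) (show -c' < -c by linarith)
        (by rw [Fser_neg, neg_neg]; exact hfb)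
        (fun x hx => by
          rw [Fser_neg]
          exact hsign (-x) ⟨by linarith [hc.1, hx.2], by linarith [hx.1]⟩)
        (by rw [gneg L η hL, neg_neg, hg', neg_zero])
        (by rw [gneg L η hL, neg_neg, hg, neg_zero])
    · -- a < 0 < b : mixed case
      have hF0 : Fser (coulombA L η) 0 = 1 := by
        rw [Fser_zero]; rfl
      have hε1 : ε = 1 := by
        rcases hε with h | h
        · exact h
        · exfalso
          have := hsign 0 ⟨haneg, hbpos⟩
          rw [hF0, h] at this
          linarith
      subst hε1
      have hfpos : ∀ x ∈ Ioo a b, 0 < Fser (coulombA L η) x := by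
        intro x hx
        have := hsign x hx
        linarith
      rcases lt_trichotomy c 0 with hcneg | hc00 | hcpos
      · rcases lt_trichotomy c' 0 with h'neg | h'00 | h'pos
        · -- both negative : mirror of mixed case
          refine no_two_mixed L (-η) hL (show (0:ℝ) < -c' by linarith)
            (show -c' < -c by linarith)
            (fun x hx => by
              rw [Fser_neg]
              exact hfpos (-x) ⟨by linarith [hc.1, hx.2], by linarith [hx.1]⟩)
            (by rw [gneg L η hL, neg_neg, hg', neg_zero])
            (by rw [gneg L η hL, neg_neg, hg, neg_zero])
        · -- c < 0 = c'
          have h1 : η < 0 := crit_neg_eta L η hL hcneg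
            (fun x hx => hfpos x ⟨lt_of_lt_of_le hc.1 hx.1, lt_trans hx.2 hbpos⟩) hg
          have h2 : η = 0 := eta_zero_of_g_zero L η hL (h'00 ▸ hg')
          linarith
        · -- c < 0 < c'
          have h1 : η < 0 := crit_neg_eta L η hL hcneg
            (fun x hx => hfpos x ⟨lt_of_lt_of_le hc.1 hx.1, lt_trans hx.2 hbpos⟩) hg
          have h2 : 0 < η := crit_pos_eta L η hL h'pos
            (fun x hx => hfpos x ⟨lt_trans haneg hx.1, lt_of_le_of_lt hx.2 hc'.2⟩) hg'
          linarith
      · -- c = 0 < c'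
        have h'pos : 0 < c' := hc00 ▸ hlt
        have h2 : η = 0 := eta_zero_of_g_zero L η hL (hc00 ▸ hg)
        have h3 : 0 < η := crit_pos_eta L η hL h'pos
          (fun x hx => hfpos x ⟨lt_trans haneg hx.1, lt_of_le_of_lt hx.2 hc'.2⟩) hg'
        linarith
      · -- 0 < c < c' : mixed case, both positive
        exact no_two_mixed L η hL hcpos hlt
          (fun x hx => hfpos x ⟨lt_trans haneg hx.1, lt_of_le_of_lt hx.2 hc'.2⟩) hg hg'
  · -- 0 < a : pure positive case
    exact no_two_pos L η hL hapos hc.1 hlt hfa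
      (fun x hx => hsign x ⟨hx.1, lt_of_le_of_lt hx.2 hc'.2⟩) hg hg'

theorem coulomb_laguerre_zeros_interlacing' (L η : ℝ) (hL : -1 < L) (a b : ℝ)
    (ha : a ≠ 0 ∧ coulombF L η a = 0) (hb : b ≠ 0 ∧ coulombF L η b = 0) (hab : a < b)
    (hconsec : ∀ x, (x ≠ 0 ∧ coulombF L η x = 0) → x ∉ Set.Ioo a b) :
    ∃! c, c ∈ Set.Ioo a b ∧ deriv (coulombF L η) c = 0 := by
  classical
  have dA := coulombA_decay L η hL
  have hFeq : coulombF L η = Fser (coulombA L η) := rfl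
  have hderiv : deriv (coulombF L η) = Fser (dcoef (coulombA L η)) :=
    funext fun x => (dA.hasDerivAt x).deriv
  have hfa : Fser (coulombA L η) a = 0 := ha.2
  have hfb : Fser (coulombA L η) b = 0 := hb.2
  have hF0 : Fser (coulombA L η) 0 = 1 := by rw [Fser_zero]; rfl
  have hne : ∀ x ∈ Ioo a b, Fser (coulombA L η) x ≠ 0 := by
    intro x hx hfx
    have hx0 : x ≠ 0 := by
      intro h
      rw [h, hF0] at hfx
      exact one_ne_zero hfx
    exact hconsec x ⟨hx0, hfx⟩ hx
  have hivt : ∀ x ∈ Ioo a b, ∀ y ∈ Ioo a b, Fser (coulombA L η) x < 0 →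
      0 < Fser (coulombA L η) y → False := by
    intro x hx y hy hfx hfy
    have hsub : uIcc x y ⊆ Ioo a b := Set.OrdConnected.uIcc_subset Set.ordConnected_Ioo hx hy
    have hmem : (0:ℝ) ∈ uIcc (Fser (coulombA L η) x) (Fser (coulombA L η) y) :=
      Set.mem_uIcc.2 (Or.inl ⟨hfx.le, hfy.le⟩)
    obtain ⟨z, hz, hfz⟩ := intermediate_value_uIcc (dA.continuous.continuousOn) hmem
    exact hne z (hsub hz) hfz
  set m := (a+b)/2 with hm
  have hmmem : m ∈ Ioo a b := ⟨by rw [hm]; linarith, by rw [hm]; linarith⟩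
  set ε : ℝ := if 0 < Fser (coulombA L η) m then 1 else -1 with hεdef
  have hε : ε = 1 ∨ ε = -1 := by
    rw [hεdef]; split <;> simp
  have hsign : ∀ x ∈ Ioo a b, 0 < ε * Fser (coulombA L η) x := by
    intro x hx
    rcases (hne m hmmem).lt_or_gt with hmneg | hmpos
    · have hεv : ε = -1 := by rw [hεdef, if_neg (not_lt.2 hmneg.le)]
      rcases (hne x hx).lt_or_gt with hxneg | hxpos
      · rw [hεv]; linarith
      · exact absurd (hivt m hmmem x hx hmneg hxpos) id
    · have hεv : ε = 1 := by rw [hεdef, if_pos hmpos]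
      rcases (hne x hx).lt_or_gt with hxneg | hxpos
      · exact absurd (hivt x hx m hmmem hxneg hmpos) id
      · rw [hεv]; linarith
  obtain ⟨c, hcmem, hc0⟩ := exists_hasDerivAt_eq_zero hab
    (dA.continuous.continuousOn) (hfa.trans hfb.symm) (fun x _ => dA.hasDerivAt x)
  refine ⟨c, ⟨hcmem, by rw [hderiv]; exact hc0⟩, ?_⟩
  rintro y ⟨hymem, hyd⟩
  have hyg : Fser (dcoef (coulombA L η)) y = 0 := by rw [← hderiv]; exact hyd
  rcases lt_trichotomy y c with h | h | h
  · exact (no_two L η hL hab ha.1 hb.1 hfa hfb hε hsign hymem hcmem h hyg hc0).elim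
  · exact h
  · exact (no_two L η hL hab ha.1 hb.1 hfa hfb hε hsign hcmem hymem h hc0 hyg).elim

end CoulombAux

/-- The zeros of `ρ ↦ F_L(η,ρ)` and of `ρ ↦ ρ F_L'(η,ρ) - (L+1) F_L(η,ρ)` are interlacing:
between any two consecutive zeros of the Coulomb wave function there is exactly one zero of
`∂𝓕_L/∂ρ(η,·)` (for positive arguments this is equivalent to the vanishing of
`ρ F_L'(η,ρ) - (L+1) F_L(η,ρ) = C_L(η) ρ^{L+2} ∂𝓕_L/∂ρ(η,ρ)`). -/
theorem coulomb_laguerre_zeros_interlacing (L η : ℝ) (hL : -1 < L) (a b : ℝ)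
    (ha : a ∈ coulombZ L η) (hb : b ∈ coulombZ L η) (hab : a < b)
    (hconsec : ∀ x ∈ coulombZ L η, x ∉ Set.Ioo a b) :
    ∃! c, c ∈ Set.Ioo a b ∧ deriv (coulombF L η) c = 0 := by
  exact CoulombAux.coulomb_laguerre_zeros_interlacing' L η hL a b ha hb hab hconsec
end
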